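/- arXiv:1403.2573 — 4 statements merged into one kernel-verified Lean document; each statement's English description precedes it below -/
import Mathlib

section
/- The number of (α,β)-rooted labelled trees on n vertices equals ∏_{i=1}^{n-1} (nβ + (α−β)i). -/
/-- A (functional encoding of a) rooted forest on `Fin n`: `p j = some i` means
`i` is the parent of `j`; acyclicity is witnessed by a depth function. -/
def IsForest (n : ℕ) (p : Fin n → Option (Fin n)) : Prop :=
  ∃ d : Fin n → ℕ, ∀ j i : Fin n, p j = some i → d i < d j

/-- An `(α,β)`-rooted labelled forest on `n` vertices: a rooted forest together
with a weight on each edge (recorded at the child), lying in `[1,α]` if the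
parent's label is smaller than the child's, and in `[1,β]` if it is larger.
Roots carry the dummy weight `0`. -/
def ABForest (n α β : ℕ) : Type :=
  { pw : (Fin n → Option (Fin n)) × (Fin n → ℕ) //
    IsForest n pw.1 ∧
    (∀ j, pw.1 j = none → pw.2 j = 0) ∧
    ∀ j i, pw.1 j = some i →
      ((i : ℕ) < (j : ℕ) → pw.2 j ∈ Finset.Icc 1 α) ∧
      ((j : ℕ) < (i : ℕ) → pw.2 j ∈ Finset.Icc 1 β) }

/-- An `(α,β)`-rooted labelled tree on `n` vertices: an `(α,β)`-forest with
exactly one root. -/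
def ABTree (n α β : ℕ) : Type :=
  { t : ABForest n α β //
    (Finset.univ.filter (fun j : Fin n => t.1.1 j = none)).card = 1 }

set_option linter.unusedSectionVars false
set_option linter.unusedVariables false
set_option maxHeartbeats 1000000

namespace AB
open Finset

variable {V : Type} [Fintype V] [LinearOrder V]

abbrev Base (V : Type) := (V → Option V) × (V → ℕ)
def pstar (p : V → Option V) (v : V) : V := (p v).getD v
def reaches (p : V → Option V) (v u : V) : Prop := ∃ k, (pstar p)^[k] v = u
def Supp (S C : Finset V) (pw : Base V) : Prop :=
  (∀ v ∉ S, pw.1 v = none) ∧ (∀ v i, pw.1 v = some i → i ∈ C) ∧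
    (∀ v, pw.1 v = none → pw.2 v = 0)
def WtT (α β : ℕ) (pw : Base V) : Prop :=
  ∀ j i, pw.1 j = some i → (i < j → pw.2 j ∈ Finset.Icc 1 α) ∧
    (j < i → pw.2 j ∈ Finset.Icc 1 β)
def WtF (α β : ℕ) (pw : Base V) : Prop :=
  ∀ j i, pw.1 j = some i → (i ≤ j → pw.2 j ∈ Finset.Icc 1 α) ∧
    (j < i → pw.2 j ∈ Finset.Icc 1 β)
def Forest (p : V → Option V) : Prop := ∃ d : V → ℕ, ∀ j i, p j = some i → d i < d j
def TreeOn (α β : ℕ) (S : Finset V) : Type :=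
  {pw : Base V // Supp S S pw ∧ WtT α β pw ∧ Forest pw.1 ∧
    (S.filter (fun v => pw.1 v = none)).card = 1}
def TreeR (α β : ℕ) (t : V) (D : Finset V) : Type :=
  {pw : Base V // Supp (insert t D) (insert t D) pw ∧ WtT α β pw ∧ Forest pw.1 ∧
    pw.1 t = none ∧ ∀ v ∈ D, pw.1 v ≠ none}
def TreeLeaf (α β : ℕ) (t : V) (D : Finset V) : Type :=
  {pw : Base V // Supp (insert t D) (insert t D) pw ∧ WtT α β pw ∧ Forest pw.1 ∧
    ((insert t D).filter (fun v => pw.1 v = none)).card = 1 ∧ ∀ v, pw.1 v ≠ some t}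
def Xfun (α β : ℕ) (C D : Finset V) : Type :=
  {pw : Base V // Supp D C pw ∧ WtF α β pw ∧ ∀ v ∈ D, pw.1 v ≠ none}

-- finiteness
lemma finite_subtype {P : Base V → Prop} (B : ℕ)
    (h : ∀ pw, P pw → ∀ v, pw.2 v ≤ B) : Finite {pw : Base V // P pw} := by
  have : Function.Injective
      (fun x : {pw : Base V // P pw} =>
        ((x.1.1, fun v => (⟨x.1.2 v, Nat.lt_succ_of_le (h x.1 x.2 v)⟩ : Fin (B+1))) :
          (V → Option V) × (V → Fin (B+1)))) := by
    rintro ⟨⟨p₁, w₁⟩, h₁⟩ ⟨⟨p₂, w₂⟩, h₂⟩ hx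
    simp only [Prod.mk.injEq] at hx
    have hw : w₁ = w₂ := funext fun v => congrArg Fin.val (congrFun hx.2 v)
    simp only [Subtype.mk.injEq, Prod.mk.injEq]
    exact ⟨hx.1, hw⟩
  exact Finite.of_injective _ this

lemma forest_no_fix {p : V → Option V} (hf : Forest p) (v : V) : p v ≠ some v := by
  obtain ⟨d, hd⟩ := hf
  intro h
  exact lt_irrefl _ (hd v v h)

lemma pstar_stay {p : V → Option V} {U : Finset V}
    (hU : ∀ v ∈ U, ∀ i, p v = some i → i ∈ U) {v : V} (hv : v ∈ U) (k : ℕ) :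
    (pstar p)^[k] v ∈ U := by
  induction k with
  | zero => simpa
  | succ k ih =>
    rw [Function.iterate_succ_apply']
    rcases h : p ((pstar p)^[k] v) with _ | u
    · simpa [pstar, h]
    · simpa [pstar, h] using hU _ ih _ h

lemma reaches_root {p : V → Option V} (hf : Forest p) {U : Finset V}
    (hU : ∀ v ∈ U, ∀ i, p v = some i → i ∈ U) {v : V} (hv : v ∈ U) :
    ∃ u ∈ U, p u = none ∧ reaches p v u := by
  obtain ⟨d, hd⟩ := hf
  have H : ∀ n (v : V), d v = n → v ∈ U → ∃ u ∈ U, p u = none ∧ reaches p v u := by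
    intro n
    induction n using Nat.strong_induction_on with
    | _ n ih =>
    intro v hdv hv
    rcases h : p v with _ | u
    · exact ⟨v, hv, h, 0, rfl⟩
    · have hu : u ∈ U := hU v hv u h
      obtain ⟨r, hr, hr2, k, hk⟩ := ih (d u) (hdv ▸ hd v u h) u rfl hu
      exact ⟨r, hr, hr2, k + 1, by rw [Function.iterate_succ_apply]; simp only [pstar, h]; exact hk⟩
  exact H (d v) v rfl hv

lemma reaches_stable {p : V → Option V} {u : V} (hu : p u = none) (k : ℕ) :
    (pstar p)^[k] u = u := by
  induction k with
  | zero => rfl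
  | succ k ih => rw [Function.iterate_succ_apply']; simp [ih, pstar, hu]

-- from a chain from v to t staying in U, if every step from U lands in U and t ∉ U then ¬reaches
lemma not_reaches {p : V → Option V} {U : Finset V}
    (hU : ∀ v ∈ U, ∀ i, p v = some i → i ∈ U) {v t : V} (hv : v ∈ U) (ht : t ∉ U) :
    ¬ reaches p v t := by
  rintro ⟨k, hk⟩
  exact ht (hk ▸ pstar_stay hU hv k)

-- new helpers
lemma reaches_self (p : V → Option V) (v : V) : reaches p v v := ⟨0, rfl⟩

lemma reaches_step {p : V → Option V} {v u t : V} (h : p v = some u)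
    (hr : reaches p v t) (hvt : v ≠ t) : reaches p u t := by
  obtain ⟨k, hk⟩ := hr
  cases k with
  | zero => exact absurd hk hvt
  | succ k =>
    rw [Function.iterate_succ_apply] at hk
    have : pstar p v = u := by rw [pstar, h]; rfl
    exact ⟨k, by rwa [this] at hk⟩

lemma reaches_of_parent {p : V → Option V} {v u t : V} (h : p v = some u)
    (hr : reaches p u t) : reaches p v t := by
  obtain ⟨k, hk⟩ := hr
  refine ⟨k + 1, ?_⟩
  rw [Function.iterate_succ_apply]
  have : pstar p v = u := by rw [pstar, h]; rfl
  rwa [this]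

lemma reaches_none {p : V → Option V} {v t : V} (h : p v = none)
    (hr : reaches p v t) : v = t := by
  obtain ⟨k, hk⟩ := hr
  rwa [reaches_stable h k] at hk

lemma reaches_trans_closed {p p' : V → Option V} {W : Finset V} {t : V}
    (hag : ∀ x ∈ W, p x = p' x)
    (hclosed : ∀ x ∈ W, ∀ u, p x = some u → u = t ∨ u ∈ W) :
    ∀ k (v : V), v ∈ W → (pstar p)^[k] v = t → reaches p' v t := by
  intro k
  induction k with
  | zero =>
    intro v _ h
    exact h ▸ reaches_self p' v
  | succ k ih =>
    intro v hv h
    rw [Function.iterate_succ_apply] at h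
    rcases hp : p v with _ | u
    · have : pstar p v = v := by rw [pstar, hp]; rfl
      rw [this] at h
      exact ih v hv h
    · have hps : pstar p v = u := by rw [pstar, hp]; rfl
      rw [hps] at h
      rcases hclosed v hv u hp with hu | hu
      · subst hu
        exact reaches_of_parent ((hag v hv) ▸ hp) (reaches_self p' u)
      · exact reaches_of_parent ((hag v hv) ▸ hp) (ih u hu h)

lemma wtf_wtt {α β : ℕ} {pw : Base V} (h : WtF α β pw) : WtT α β pw :=
  fun j i hj => ⟨fun hlt => (h j i hj).1 (le_of_lt hlt), (h j i hj).2⟩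

lemma wtt_wtf {α β : ℕ} {pw : Base V} (hf : Forest pw.1) (h : WtT α β pw) : WtF α β pw := by
  intro j i hj
  refine ⟨?_, (h j i hj).2⟩
  intro hle
  rcases lt_or_eq_of_le hle with hlt | heq
  · exact (h j i hj).1 hlt
  · exact absurd hj (heq ▸ forest_no_fix hf j)

noncomputable def reachSet (p : V → Option V) (t : V) (D : Finset V) : Finset V :=
  @Finset.filter _ (fun v => reaches p v t) (Classical.decPred _) D

lemma mem_reachSet {p : V → Option V} {t : V} {D : Finset V} {v : V} :
    v ∈ reachSet p t D ↔ v ∈ D ∧ reaches p v t := by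
  rw [reachSet]
  exact @Finset.mem_filter V (fun v => reaches p v t) (Classical.decPred _) D v

section splitF
variable {α β : ℕ} {t : V} {D₀ : Finset V}

lemma glueF_mem (ht : t ∉ D₀) (A : Finset V) (hA : A ⊆ D₀)
    (p1 : V → Option V) (w1 : V → ℕ)
    (hx1 : Supp (insert t A) (insert t A) (p1, w1) ∧ WtT α β (p1, w1) ∧ Forest p1 ∧
      p1 t = none ∧ ∀ v ∈ A, p1 v ≠ none)
    (p2 : V → Option V) (w2 : V → ℕ)
    (hx2 : Supp (D₀ \ A) (D₀ \ A) (p2, w2) ∧ WtF α β (p2, w2) ∧ ∀ v ∈ D₀ \ A, p2 v ≠ none) :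
    Supp D₀ (insert t D₀)
        ((fun v => if v ∈ A then p1 v else p2 v, fun v => if v ∈ A then w1 v else w2 v) : Base V) ∧
      WtF α β (fun v => if v ∈ A then p1 v else p2 v, fun v => if v ∈ A then w1 v else w2 v) ∧
      ∀ v ∈ D₀, (if v ∈ A then p1 v else p2 v) ≠ none := by
  obtain ⟨hs1, hwt1, hf1, hroot1, hne1⟩ := hx1
  obtain ⟨hs2, hwt2, hne2⟩ := hx2
  refine ⟨⟨?_, ?_, ?_⟩, ?_, ?_⟩
  · intro v hv
    dsimp only
    rw [if_neg (fun h => hv (hA h))]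
    exact hs2.1 v (fun h => hv (mem_sdiff.1 h).1)
  · intro v i h
    dsimp only at h
    by_cases hv : v ∈ A
    · rw [if_pos hv] at h
      rcases mem_insert.1 (hs1.2.1 v i h) with hh | hh
      · exact hh ▸ mem_insert_self _ _
      · exact mem_insert_of_mem (hA hh)
    · rw [if_neg hv] at h
      exact mem_insert_of_mem (mem_sdiff.1 (hs2.2.1 v i h)).1
  · intro v h
    dsimp only at h ⊢
    by_cases hv : v ∈ A
    · rw [if_pos hv] at h ⊢; exact hs1.2.2 v h
    · rw [if_neg hv] at h ⊢; exact hs2.2.2 v h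
  · intro j i h
    dsimp only at h ⊢
    by_cases hv : j ∈ A
    · rw [if_pos hv] at h ⊢
      exact wtt_wtf hf1 hwt1 j i h
    · rw [if_neg hv] at h ⊢
      exact hwt2 j i h
  · intro v hv
    by_cases h : v ∈ A
    · rw [if_pos h]; exact hne1 v h
    · rw [if_neg h]; exact hne2 v (mem_sdiff.2 ⟨hv, h⟩)

noncomputable def glueF (ht : t ∉ D₀) :
    (Σ A : {A : Finset V // A ⊆ D₀}, TreeR α β t A × Xfun α β (D₀ \ A) (D₀ \ A)) →
      Xfun α β (insert t D₀) D₀ :=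
  fun x =>
    ⟨(fun v => if v ∈ (x.1 : Finset V) then x.2.1.1.1 v else x.2.2.1.1 v,
      fun v => if v ∈ (x.1 : Finset V) then x.2.1.1.2 v else x.2.2.1.2 v),
      glueF_mem ht x.1 x.1.2 x.2.1.1.1 x.2.1.1.2 x.2.1.2 x.2.2.1.1 x.2.2.1.2 x.2.2.2⟩

lemma glueF_A (ht : t ∉ D₀) (A : Finset V) (hA : A ⊆ D₀)
    (p1 : V → Option V) (w1 : V → ℕ)
    (hx1 : Supp (insert t A) (insert t A) (p1, w1) ∧ WtT α β (p1, w1) ∧ Forest p1 ∧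
      p1 t = none ∧ ∀ v ∈ A, p1 v ≠ none)
    (p2 : V → Option V) (w2 : V → ℕ)
    (hx2 : Supp (D₀ \ A) (D₀ \ A) (p2, w2) ∧ WtF α β (p2, w2) ∧ ∀ v ∈ D₀ \ A, p2 v ≠ none) :
    reachSet (fun v => if v ∈ A then p1 v else p2 v) t D₀ = A := by
  obtain ⟨hs1, hwt1, hf1, hroot1, hne1⟩ := hx1
  obtain ⟨hs2, hwt2, hne2⟩ := hx2
  ext v
  rw [mem_reachSet]
  constructor
  · rintro ⟨hvD, hreach⟩
    by_contra hvA
    have hclosed : ∀ x ∈ D₀ \ A, ∀ i,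
        (if x ∈ A then p1 x else p2 x) = some i → i ∈ D₀ \ A := by
      intro x hx i h
      rw [if_neg (mem_sdiff.1 hx).2] at h
      exact hs2.2.1 x i h
    exact not_reaches hclosed (mem_sdiff.2 ⟨hvD, hvA⟩) (fun h => ht (mem_sdiff.1 h).1) hreach
  · intro hvA
    refine ⟨hA hvA, ?_⟩
    have hU : ∀ x ∈ insert t A, ∀ i, p1 x = some i → i ∈ insert t A :=
      fun x _ i h => hs1.2.1 x i h
    obtain ⟨u, hu, hunone, hreach1⟩ := reaches_root hf1 hU (mem_insert_of_mem hvA)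
    have hut : u = t := by
      rcases mem_insert.1 hu with h | h
      · exact h
      · exact absurd hunone (hne1 u h)
    subst hut
    obtain ⟨k, hk⟩ := hreach1
    refine reaches_trans_closed (p := p1)
      (p' := fun v => if v ∈ A then p1 v else p2 v) (W := A) ?_ ?_ k v hvA hk
    · intro x hx
      rw [if_pos hx]
    · intro x hx i h
      rcases mem_insert.1 (hs1.2.1 x i h) with hh | hh
      · exact Or.inl hh
      · exact Or.inr hh

lemma glueF_injective (ht : t ∉ D₀) :
    Function.Injective (glueF (α := α) (β := β) ht) := by
  rintro ⟨⟨A, hA⟩, ⟨⟨p1, w1⟩, hx1⟩, ⟨⟨p2, w2⟩, hx2⟩⟩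
    ⟨⟨A', hA'⟩, ⟨⟨p1', w1'⟩, hx1'⟩, ⟨⟨p2', w2'⟩, hx2'⟩⟩ h
  have hval := congrArg (fun z : Xfun α β (insert t D₀) D₀ => z.1) h
  dsimp only [glueF] at hval
  have hP := congrArg Prod.fst hval
  have hW := congrArg Prod.snd hval
  dsimp only at hP hW
  have hAA : A = A' := by
    rw [← glueF_A ht A hA p1 w1 hx1 p2 w2 hx2, ← glueF_A ht A' hA' p1' w1' hx1' p2' w2' hx2']
    rw [hP]
  subst hAA
  have hp1 : p1 = p1' := by
    funext v
    by_cases hv : v ∈ A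
    · have := congrFun hP v
      rwa [if_pos hv, if_pos hv] at this
    · have e : ∀ (q : V → Option V) (hq : Supp (insert t A) (insert t A) (q, w1) ∨
          Supp (insert t A) (insert t A) (q, w1')), q t = none → (∀ x ∉ insert t A, q x = none) →
          q v = none := by
        intro q _ hqt hqout
        by_cases hvt : v = t
        · rw [hvt]; exact hqt
        · exact hqout v (by simp [hvt, hv])
      rw [e p1 (Or.inl hx1.1) hx1.2.2.2.1 hx1.1.1, e p1' (Or.inr hx1'.1) hx1'.2.2.2.1 hx1'.1.1]
  have hw1 : w1 = w1' := by
    funext v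
    by_cases hv : v ∈ A
    · have := congrFun hW v
      rwa [if_pos hv, if_pos hv] at this
    · have e1 : p1 v = none := by
        by_cases hvt : v = t
        · rw [hvt]; exact hx1.2.2.2.1
        · exact hx1.1.1 v (by simp [hvt, hv])
      have e1' : p1' v = none := by
        by_cases hvt : v = t
        · rw [hvt]; exact hx1'.2.2.2.1
        · exact hx1'.1.1 v (by simp [hvt, hv])
      have f1 : w1 v = 0 := hx1.1.2.2 v e1
      have f1' : w1' v = 0 := hx1'.1.2.2 v e1'
      rw [f1, f1']
  have hp2 : p2 = p2' := by
    funext v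
    by_cases hv : v ∈ A
    · have e : v ∉ D₀ \ A := fun h => (mem_sdiff.1 h).2 hv
      have f2 : p2 v = none := hx2.1.1 v e
      have f2' : p2' v = none := hx2'.1.1 v e
      rw [f2, f2']
    · have := congrFun hP v
      rwa [if_neg hv, if_neg hv] at this
  have hw2 : w2 = w2' := by
    funext v
    by_cases hv : v ∈ A
    · have e : v ∉ D₀ \ A := fun h => (mem_sdiff.1 h).2 hv
      have f2 : w2 v = 0 := hx2.1.2.2 v (hx2.1.1 v e)
      have f2' : w2' v = 0 := hx2'.1.2.2 v (hx2'.1.1 v e)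
      rw [f2, f2']
    · have := congrFun hW v
      rwa [if_neg hv, if_neg hv] at this
  subst hp1; subst hw1; subst hp2; subst hw2
  rfl

lemma glueF_surjective (ht : t ∉ D₀) :
    Function.Surjective (glueF (α := α) (β := β) ht) := by
  classical
  rintro ⟨⟨p, w⟩, hs, hwf, hne⟩
  set A := reachSet p t D₀ with hAdef
  have hA : A ⊆ D₀ := fun v hv => (mem_reachSet.1 hv).1
  have htA : t ∉ A := fun h => ht (hA h)
  have hstep : ∀ v ∈ A, ∀ i, p v = some i → i = t ∨ i ∈ A := by
    intro v hv i h
    obtain ⟨hvD, hvreach⟩ := mem_reachSet.1 hv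
    have hvt : v ≠ t := fun e => ht (e ▸ hvD)
    have hi : reaches p i t := reaches_step h hvreach hvt
    by_cases hit : i = t
    · exact Or.inl hit
    · rcases mem_insert.1 (hs.2.1 v i h) with hh | hh
      · exact absurd hh hit
      · exact Or.inr (mem_reachSet.2 ⟨hh, hi⟩)
  have hx1 : Supp (insert t A) (insert t A)
        ((fun v => if v ∈ A then p v else none, fun v => if v ∈ A then w v else 0) : Base V) ∧
      WtT α β (fun v => if v ∈ A then p v else none, fun v => if v ∈ A then w v else 0) ∧
      Forest (fun v => if v ∈ A then p v else none) ∧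
      (if t ∈ A then p t else none) = none ∧
      ∀ v ∈ A, (if v ∈ A then p v else none) ≠ none := by
    refine ⟨⟨?_, ?_, ?_⟩, ?_, ?_, ?_, ?_⟩
    · intro v hv
      dsimp only
      rw [if_neg (fun h => hv (mem_insert_of_mem h))]
    · intro v i h
      dsimp only at h
      by_cases hv : v ∈ A
      · rw [if_pos hv] at h
        rcases hstep v hv i h with hh | hh
        · exact hh ▸ mem_insert_self _ _
        · exact mem_insert_of_mem hh
      · rw [if_neg hv] at h; exact absurd h (by simp)
    · intro v h
      dsimp only at h ⊢
      by_cases hv : v ∈ A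
      · rw [if_pos hv] at h ⊢; exact hs.2.2 v h
      · rw [if_neg hv]
    · intro j i h
      dsimp only at h ⊢
      by_cases hv : j ∈ A
      · rw [if_pos hv] at h ⊢
        exact ⟨fun hc => (hwf j i h).1 (le_of_lt hc), (hwf j i h).2⟩
      · rw [if_neg hv] at h; exact absurd h (by simp)
    · refine ⟨fun v => if hv : reaches p v t then Nat.find hv else 0, ?_⟩
      intro j i h
      dsimp only at h ⊢
      by_cases hjA : j ∈ A
      · rw [if_pos hjA] at h
        obtain ⟨hjD, hj⟩ := mem_reachSet.1 hjA
        have hjt : j ≠ t := fun e => ht (e ▸ hjD)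
        have hi : reaches p i t := reaches_step h hj hjt
        rw [dif_pos hi, dif_pos hj]
        have hspec := Nat.find_spec hj
        have hk0 : Nat.find hj ≠ 0 := by
          intro h0; rw [h0] at hspec; exact hjt hspec
        obtain ⟨m, hm⟩ := Nat.exists_eq_succ_of_ne_zero hk0
        rw [hm, Function.iterate_succ_apply] at hspec
        have hpsj : pstar p j = i := by rw [pstar, h]; rfl
        rw [hpsj] at hspec
        have := Nat.find_min' hi hspec
        omega
      · rw [if_neg hjA] at h; exact absurd h (by simp)
    · rw [if_neg htA]
    · intro v hv
      rw [if_pos hv]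
      exact hne v (hA hv)
  have hx2 : Supp (D₀ \ A) (D₀ \ A)
        ((fun v => if v ∈ D₀ \ A then p v else none,
          fun v => if v ∈ D₀ \ A then w v else 0) : Base V) ∧
      WtF α β (fun v => if v ∈ D₀ \ A then p v else none,
        fun v => if v ∈ D₀ \ A then w v else 0) ∧
      ∀ v ∈ D₀ \ A, (if v ∈ D₀ \ A then p v else none) ≠ none := by
    refine ⟨⟨?_, ?_, ?_⟩, ?_, ?_⟩
    · intro v hv
      dsimp only
      rw [if_neg hv]
    · intro v i h
      dsimp only at h
      by_cases hv : v ∈ D₀ \ A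
      · rw [if_pos hv] at h
        obtain ⟨hvD, hvA⟩ := mem_sdiff.1 hv
        have hit : i ≠ t := by
          intro hit
          exact hvA (mem_reachSet.2 ⟨hvD, reaches_of_parent h (hit ▸ reaches_self p i)⟩)
        have hiD : i ∈ D₀ := by
          rcases mem_insert.1 (hs.2.1 v i h) with hh | hh
          · exact absurd hh hit
          · exact hh
        have hiA : i ∉ A := by
          intro hiA
          exact hvA (mem_reachSet.2 ⟨hvD, reaches_of_parent h (mem_reachSet.1 hiA).2⟩)
        exact mem_sdiff.2 ⟨hiD, hiA⟩
      · rw [if_neg hv] at h; exact absurd h (by simp)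
    · intro v h
      dsimp only at h ⊢
      by_cases hv : v ∈ D₀ \ A
      · rw [if_pos hv] at h ⊢; exact hs.2.2 v h
      · rw [if_neg hv]
    · intro j i h
      dsimp only at h ⊢
      by_cases hv : j ∈ D₀ \ A
      · rw [if_pos hv] at h ⊢
        exact hwf j i h
      · rw [if_neg hv] at h; exact absurd h (by simp)
    · intro v hv
      rw [if_pos hv]
      exact hne v (mem_sdiff.1 hv).1
  refine ⟨⟨⟨A, hA⟩, ⟨(fun v => if v ∈ A then p v else none,
      fun v => if v ∈ A then w v else 0), hx1⟩,
    ⟨(fun v => if v ∈ D₀ \ A then p v else none,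
      fun v => if v ∈ D₀ \ A then w v else 0), hx2⟩⟩, ?_⟩
  apply Subtype.ext
  show ((fun v => if v ∈ A then (if v ∈ A then p v else none)
        else (if v ∈ D₀ \ A then p v else none),
      fun v => if v ∈ A then (if v ∈ A then w v else 0)
        else (if v ∈ D₀ \ A then w v else 0)) : Base V) = (p, w)
  have e1 : (fun v => if v ∈ A then (if v ∈ A then p v else none)
      else (if v ∈ D₀ \ A then p v else none)) = p := by
    funext v
    by_cases hv : v ∈ A
    · rw [if_pos hv, if_pos hv]
    · rw [if_neg hv]
      by_cases hvD : v ∈ D₀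
      · rw [if_pos (mem_sdiff.2 ⟨hvD, hv⟩)]
      · rw [if_neg (fun h => hvD (mem_sdiff.1 h).1)]
        exact (hs.1 v hvD).symm
  have e2 : (fun v => if v ∈ A then (if v ∈ A then w v else 0)
      else (if v ∈ D₀ \ A then w v else 0)) = w := by
    funext v
    by_cases hv : v ∈ A
    · rw [if_pos hv, if_pos hv]
    · rw [if_neg hv]
      by_cases hvD : v ∈ D₀
      · rw [if_pos (mem_sdiff.2 ⟨hvD, hv⟩)]
      · rw [if_neg (fun h => hvD (mem_sdiff.1 h).1)]
        exact (hs.2.2 v (hs.1 v hvD)).symm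
  rw [e1, e2]

end splitF

lemma iterate_d_le {p : V → Option V} {d : V → ℕ}
    (hd : ∀ j i, p j = some i → d i < d j) : ∀ (k : ℕ) (v : V), d ((pstar p)^[k] v) ≤ d v := by
  intro k
  induction k with
  | zero => intro v; exact le_refl _
  | succ k ih =>
    intro v
    rw [Function.iterate_succ_apply']
    rcases h : p ((pstar p)^[k] v) with _ | z
    · have : pstar p ((pstar p)^[k] v) = (pstar p)^[k] v := by rw [pstar, h]; rfl
      rw [this]; exact ih v
    · have : pstar p ((pstar p)^[k] v) = z := by rw [pstar, h]; rfl
      rw [this]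
      exact le_trans (le_of_lt (hd _ z h)) (ih v)

lemma reaches_d_le {p : V → Option V} {d : V → ℕ}
    (hd : ∀ j i, p j = some i → d i < d j) {v u : V} (h : reaches p v u) : d u ≤ d v := by
  obtain ⟨k, hk⟩ := h
  exact hk ▸ iterate_d_le hd k v

section splitT
variable {α β : ℕ} {t : V} {D₀ : Finset V}

lemma glueT_mem (ht : t ∉ D₀) (A : Finset V) (hA : A ⊆ D₀)
    (p1 : V → Option V) (w1 : V → ℕ)
    (hx1 : Supp (insert t A) (insert t A) (p1, w1) ∧ WtT α β (p1, w1) ∧ Forest p1 ∧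
      p1 t = none ∧ ∀ v ∈ A, p1 v ≠ none)
    (p2 : V → Option V) (w2 : V → ℕ)
    (hx2 : Supp (insert t (D₀ \ A)) (insert t (D₀ \ A)) (p2, w2) ∧ WtT α β (p2, w2) ∧
      Forest p2 ∧
      ((insert t (D₀ \ A)).filter (fun v => p2 v = none)).card = 1 ∧ ∀ v, p2 v ≠ some t) :
    Supp (insert t D₀) (insert t D₀)
        ((fun v => if v ∈ A then p1 v else p2 v, fun v => if v ∈ A then w1 v else w2 v) : Base V) ∧
      WtT α β (fun v => if v ∈ A then p1 v else p2 v, fun v => if v ∈ A then w1 v else w2 v) ∧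
      Forest (fun v => if v ∈ A then p1 v else p2 v) ∧
      ((insert t D₀).filter (fun v => (if v ∈ A then p1 v else p2 v) = none)).card = 1 := by
  obtain ⟨hs1, hwt1, hf1, hroot1, hne1⟩ := hx1
  obtain ⟨hs2, hwt2, hf2, hc2, hnc2⟩ := hx2
  have htA : t ∉ A := fun h => ht (hA h)
  refine ⟨⟨?_, ?_, ?_⟩, ?_, ?_, ?_⟩
  · intro v hv
    dsimp only
    have hvA : v ∉ A := fun h => hv (mem_insert_of_mem (hA h))
    rw [if_neg hvA]
    refine hs2.1 v ?_
    intro h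
    rcases mem_insert.1 h with hh | hh
    · exact hv (hh ▸ mem_insert_self _ _)
    · exact hv (mem_insert_of_mem (mem_sdiff.1 hh).1)
  · intro v i h
    dsimp only at h
    by_cases hv : v ∈ A
    · rw [if_pos hv] at h
      rcases mem_insert.1 (hs1.2.1 v i h) with hh | hh
      · exact hh ▸ mem_insert_self _ _
      · exact mem_insert_of_mem (hA hh)
    · rw [if_neg hv] at h
      rcases mem_insert.1 (hs2.2.1 v i h) with hh | hh
      · exact hh ▸ mem_insert_self _ _
      · exact mem_insert_of_mem (mem_sdiff.1 hh).1
  · intro v h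
    dsimp only at h ⊢
    by_cases hv : v ∈ A
    · rw [if_pos hv] at h ⊢; exact hs1.2.2 v h
    · rw [if_neg hv] at h ⊢; exact hs2.2.2 v h
  · intro j i h
    dsimp only at h ⊢
    by_cases hv : j ∈ A
    · rw [if_pos hv] at h ⊢; exact hwt1 j i h
    · rw [if_neg hv] at h ⊢; exact hwt2 j i h
  · obtain ⟨d1, hd1⟩ := hf1
    obtain ⟨d2, hd2⟩ := hf2
    refine ⟨fun v => if v ∈ A then d2 t + 1 + d1 v else d2 v, ?_⟩
    intro j i h
    dsimp only at h ⊢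
    by_cases hv : j ∈ A
    · rw [if_pos hv] at h ⊢
      rcases mem_insert.1 (hs1.2.1 j i h) with hh | hh
      · rw [hh, if_neg htA]
        omega
      · rw [if_pos hh]
        have := hd1 j i h
        omega
    · rw [if_neg hv] at h ⊢
      have hiD : i ∈ D₀ \ A := by
        rcases mem_insert.1 (hs2.2.1 j i h) with hh | hh
        · exact absurd h (hh ▸ hnc2 j)
        · exact hh
      rw [if_neg (mem_sdiff.1 hiD).2]
      exact hd2 j i h
  · rw [← hc2]
    apply congrArg Finset.card
    ext z
    simp only [mem_filter]
    constructor
    · rintro ⟨hzU, hznone⟩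
      have hzA : z ∉ A := by
        intro hzA
        rw [if_pos hzA] at hznone
        exact hne1 z hzA hznone
      rw [if_neg hzA] at hznone
      refine ⟨?_, hznone⟩
      rcases mem_insert.1 hzU with hh | hh
      · exact hh ▸ mem_insert_self _ _
      · exact mem_insert_of_mem (mem_sdiff.2 ⟨hh, hzA⟩)
    · rintro ⟨hz, hznone⟩
      have hzA : z ∉ A := by
        rcases mem_insert.1 hz with hh | hh
        · exact hh ▸ htA
        · exact (mem_sdiff.1 hh).2
      refine ⟨?_, by rw [if_neg hzA]; exact hznone⟩
      rcases mem_insert.1 hz with hh | hh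
      · exact hh ▸ mem_insert_self _ _
      · exact mem_insert_of_mem (mem_sdiff.1 hh).1

noncomputable def glueT (ht : t ∉ D₀) :
    (Σ A : {A : Finset V // A ⊆ D₀}, TreeR α β t A × TreeLeaf α β t (D₀ \ A)) →
      TreeOn α β (insert t D₀) :=
  fun x =>
    ⟨(fun v => if v ∈ (x.1 : Finset V) then x.2.1.1.1 v else x.2.2.1.1 v,
      fun v => if v ∈ (x.1 : Finset V) then x.2.1.1.2 v else x.2.2.1.2 v),
      glueT_mem ht x.1 x.1.2 x.2.1.1.1 x.2.1.1.2 x.2.1.2 x.2.2.1.1 x.2.2.1.2 x.2.2.2⟩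

lemma glueT_A (ht : t ∉ D₀) (A : Finset V) (hA : A ⊆ D₀)
    (p1 : V → Option V) (w1 : V → ℕ)
    (hx1 : Supp (insert t A) (insert t A) (p1, w1) ∧ WtT α β (p1, w1) ∧ Forest p1 ∧
      p1 t = none ∧ ∀ v ∈ A, p1 v ≠ none)
    (p2 : V → Option V) (w2 : V → ℕ)
    (hx2 : Supp (insert t (D₀ \ A)) (insert t (D₀ \ A)) (p2, w2) ∧ WtT α β (p2, w2) ∧
      Forest p2 ∧
      ((insert t (D₀ \ A)).filter (fun v => p2 v = none)).card = 1 ∧ ∀ v, p2 v ≠ some t) :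
    reachSet (fun v => if v ∈ A then p1 v else p2 v) t D₀ = A := by
  obtain ⟨hs1, hwt1, hf1, hroot1, hne1⟩ := hx1
  obtain ⟨hs2, hwt2, hf2, hc2, hnc2⟩ := hx2
  ext v
  rw [mem_reachSet]
  constructor
  · rintro ⟨hvD, hreach⟩
    by_contra hvA
    have hclosed : ∀ x ∈ D₀ \ A, ∀ i,
        (if x ∈ A then p1 x else p2 x) = some i → i ∈ D₀ \ A := by
      intro x hx i h
      rw [if_neg (mem_sdiff.1 hx).2] at h
      rcases mem_insert.1 (hs2.2.1 x i h) with hh | hh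
      · exact absurd h (hh ▸ hnc2 x)
      · exact hh
    exact not_reaches hclosed (mem_sdiff.2 ⟨hvD, hvA⟩) (fun h => ht (mem_sdiff.1 h).1) hreach
  · intro hvA
    refine ⟨hA hvA, ?_⟩
    have hU : ∀ x ∈ insert t A, ∀ i, p1 x = some i → i ∈ insert t A :=
      fun x _ i h => hs1.2.1 x i h
    obtain ⟨u, hu, hunone, hreach1⟩ := reaches_root hf1 hU (mem_insert_of_mem hvA)
    have hut : u = t := by
      rcases mem_insert.1 hu with h | h
      · exact h
      · exact absurd hunone (hne1 u h)
    subst hut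
    obtain ⟨k, hk⟩ := hreach1
    refine reaches_trans_closed (p := p1)
      (p' := fun v => if v ∈ A then p1 v else p2 v) (W := A) ?_ ?_ k v hvA hk
    · intro x hx
      rw [if_pos hx]
    · intro x hx i h
      rcases mem_insert.1 (hs1.2.1 x i h) with hh | hh
      · exact Or.inl hh
      · exact Or.inr hh

lemma glueT_injective (ht : t ∉ D₀) :
    Function.Injective (glueT (α := α) (β := β) ht) := by
  rintro ⟨⟨A, hA⟩, ⟨⟨p1, w1⟩, hx1⟩, ⟨⟨p2, w2⟩, hx2⟩⟩
    ⟨⟨A', hA'⟩, ⟨⟨p1', w1'⟩, hx1'⟩, ⟨⟨p2', w2'⟩, hx2'⟩⟩ h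
  have hval := congrArg (fun z : TreeOn α β (insert t D₀) => z.1) h
  dsimp only [glueT] at hval
  have hP := congrArg Prod.fst hval
  have hW := congrArg Prod.snd hval
  dsimp only at hP hW
  have hAA : A = A' := by
    rw [← glueT_A ht A hA p1 w1 hx1 p2 w2 hx2, ← glueT_A ht A' hA' p1' w1' hx1' p2' w2' hx2']
    rw [hP]
  subst hAA
  have hp1 : p1 = p1' := by
    funext v
    by_cases hv : v ∈ A
    · have := congrFun hP v
      rwa [if_pos hv, if_pos hv] at this
    · have e1 : p1 v = none := by
        by_cases hvt : v = t
        · rw [hvt]; exact hx1.2.2.2.1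
        · exact hx1.1.1 v (by simp [hvt, hv])
      have e1' : p1' v = none := by
        by_cases hvt : v = t
        · rw [hvt]; exact hx1'.2.2.2.1
        · exact hx1'.1.1 v (by simp [hvt, hv])
      rw [e1, e1']
  have hw1 : w1 = w1' := by
    funext v
    by_cases hv : v ∈ A
    · have := congrFun hW v
      rwa [if_pos hv, if_pos hv] at this
    · have e1 : p1 v = none := by
        by_cases hvt : v = t
        · rw [hvt]; exact hx1.2.2.2.1
        · exact hx1.1.1 v (by simp [hvt, hv])
      have e1' : p1' v = none := by
        by_cases hvt : v = t
        · rw [hvt]; exact hx1'.2.2.2.1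
        · exact hx1'.1.1 v (by simp [hvt, hv])
      have f1 : w1 v = 0 := hx1.1.2.2 v e1
      have f1' : w1' v = 0 := hx1'.1.2.2 v e1'
      rw [f1, f1']
  have hAmem : ∀ v, v ∈ A → v ∉ insert t (D₀ \ A) := by
    intro v hv h
    rcases mem_insert.1 h with hh | hh
    · exact ht (hA (hh ▸ hv))
    · exact (mem_sdiff.1 hh).2 hv
  have hp2 : p2 = p2' := by
    funext v
    by_cases hv : v ∈ A
    · have f2 : p2 v = none := hx2.1.1 v (hAmem v hv)
      have f2' : p2' v = none := hx2'.1.1 v (hAmem v hv)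
      rw [f2, f2']
    · have := congrFun hP v
      rwa [if_neg hv, if_neg hv] at this
  have hw2 : w2 = w2' := by
    funext v
    by_cases hv : v ∈ A
    · have f2 : w2 v = 0 := hx2.1.2.2 v (hx2.1.1 v (hAmem v hv))
      have f2' : w2' v = 0 := hx2'.1.2.2 v (hx2'.1.1 v (hAmem v hv))
      rw [f2, f2']
    · have := congrFun hW v
      rwa [if_neg hv, if_neg hv] at this
  subst hp1; subst hw1; subst hp2; subst hw2
  rfl

end splitT

section splitT2
variable {α β : ℕ} {t : V} {D₀ : Finset V}

lemma glueT_surjective (ht : t ∉ D₀) :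
    Function.Surjective (glueT (α := α) (β := β) ht) := by
  classical
  rintro ⟨⟨p, w⟩, hs, hwt, hf, hc⟩
  obtain ⟨d, hd⟩ := hf
  set A := reachSet p t D₀ with hAdef
  have hA : A ⊆ D₀ := fun v hv => (mem_reachSet.1 hv).1
  have htA : t ∉ A := fun h => ht (hA h)
  have hAne : ∀ v ∈ A, p v ≠ none := by
    intro v hv hnone
    obtain ⟨hvD, hvreach⟩ := mem_reachSet.1 hv
    exact ht ((reaches_none hnone hvreach) ▸ hvD)
  have hstep : ∀ v ∈ A, ∀ i, p v = some i → i = t ∨ i ∈ A := by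
    intro v hv i h
    obtain ⟨hvD, hvreach⟩ := mem_reachSet.1 hv
    have hvt : v ≠ t := fun e => ht (e ▸ hvD)
    have hi : reaches p i t := reaches_step h hvreach hvt
    by_cases hit : i = t
    · exact Or.inl hit
    · rcases mem_insert.1 (hs.2.1 v i h) with hh | hh
      · exact absurd hh hit
      · exact Or.inr (mem_reachSet.2 ⟨hh, hi⟩)
  have hx1 : Supp (insert t A) (insert t A)
        ((fun v => if v ∈ A then p v else none, fun v => if v ∈ A then w v else 0) : Base V) ∧
      WtT α β (fun v => if v ∈ A then p v else none, fun v => if v ∈ A then w v else 0) ∧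
      Forest (fun v => if v ∈ A then p v else none) ∧
      (if t ∈ A then p t else none) = none ∧
      ∀ v ∈ A, (if v ∈ A then p v else none) ≠ none := by
    refine ⟨⟨?_, ?_, ?_⟩, ?_, ?_, ?_, ?_⟩
    · intro v hv
      dsimp only
      rw [if_neg (fun h => hv (mem_insert_of_mem h))]
    · intro v i h
      dsimp only at h
      by_cases hv : v ∈ A
      · rw [if_pos hv] at h
        rcases hstep v hv i h with hh | hh
        · exact hh ▸ mem_insert_self _ _
        · exact mem_insert_of_mem hh
      · rw [if_neg hv] at h; exact absurd h (by simp)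
    · intro v h
      dsimp only at h ⊢
      by_cases hv : v ∈ A
      · rw [if_pos hv] at h ⊢; exact hs.2.2 v h
      · rw [if_neg hv]
    · intro j i h
      dsimp only at h ⊢
      by_cases hv : j ∈ A
      · rw [if_pos hv] at h ⊢
        exact hwt j i h
      · rw [if_neg hv] at h; exact absurd h (by simp)
    · refine ⟨d, ?_⟩
      intro j i h
      dsimp only at h
      by_cases hv : j ∈ A
      · rw [if_pos hv] at h
        exact hd j i h
      · rw [if_neg hv] at h; exact absurd h (by simp)
    · rw [if_neg htA]
    · intro v hv
      rw [if_pos hv]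
      exact hAne v hv
  have hBmem : ∀ v, v ∈ insert t (D₀ \ A) → v ∉ A := by
    intro v hv hvA
    rcases mem_insert.1 hv with hh | hh
    · exact htA (hh ▸ hvA)
    · exact (mem_sdiff.1 hh).2 hvA
  have hx2 : Supp (insert t (D₀ \ A)) (insert t (D₀ \ A))
        ((fun v => if v ∈ insert t (D₀ \ A) then p v else none,
          fun v => if v ∈ insert t (D₀ \ A) then w v else 0) : Base V) ∧
      WtT α β (fun v => if v ∈ insert t (D₀ \ A) then p v else none,
        fun v => if v ∈ insert t (D₀ \ A) then w v else 0) ∧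
      Forest (fun v => if v ∈ insert t (D₀ \ A) then p v else none) ∧
      ((insert t (D₀ \ A)).filter
        (fun v => (if v ∈ insert t (D₀ \ A) then p v else none) = none)).card = 1 ∧
      ∀ v, (if v ∈ insert t (D₀ \ A) then p v else none) ≠ some t := by
    have htarget : ∀ v, v ∈ insert t (D₀ \ A) → ∀ i, p v = some i → i ∈ insert t (D₀ \ A) := by
      intro v hv i h
      rcases mem_insert.1 hv with hvt | hvB
      · -- v = t
        subst hvt
        have hit : i ≠ v := fun e => forest_no_fix ⟨d, hd⟩ v (e ▸ h)
        have hiD : i ∈ D₀ := by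
          rcases mem_insert.1 (hs.2.1 v i h) with hh | hh
          · exact absurd hh hit
          · exact hh
        have hiA : i ∉ A := by
          intro hiA
          obtain ⟨_, hir⟩ := mem_reachSet.1 hiA
          have h1 : d v ≤ d i := reaches_d_le hd hir
          have h2 : d i < d v := hd v i h
          omega
        exact mem_insert_of_mem (mem_sdiff.2 ⟨hiD, hiA⟩)
      · obtain ⟨hvD, hvA⟩ := mem_sdiff.1 hvB
        have hit : i ≠ t := by
          intro hit
          exact hvA (mem_reachSet.2 ⟨hvD, reaches_of_parent h (hit ▸ reaches_self p i)⟩)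
        have hiD : i ∈ D₀ := by
          rcases mem_insert.1 (hs.2.1 v i h) with hh | hh
          · exact absurd hh hit
          · exact hh
        have hiA : i ∉ A := by
          intro hiA
          exact hvA (mem_reachSet.2 ⟨hvD, reaches_of_parent h (mem_reachSet.1 hiA).2⟩)
        exact mem_insert_of_mem (mem_sdiff.2 ⟨hiD, hiA⟩)
    refine ⟨⟨?_, ?_, ?_⟩, ?_, ?_, ?_, ?_⟩
    · intro v hv
      dsimp only
      rw [if_neg hv]
    · intro v i h
      dsimp only at h
      by_cases hv : v ∈ insert t (D₀ \ A)
      · rw [if_pos hv] at h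
        exact htarget v hv i h
      · rw [if_neg hv] at h; exact absurd h (by simp)
    · intro v h
      dsimp only at h ⊢
      by_cases hv : v ∈ insert t (D₀ \ A)
      · rw [if_pos hv] at h ⊢; exact hs.2.2 v h
      · rw [if_neg hv]
    · intro j i h
      dsimp only at h ⊢
      by_cases hv : j ∈ insert t (D₀ \ A)
      · rw [if_pos hv] at h ⊢
        exact hwt j i h
      · rw [if_neg hv] at h; exact absurd h (by simp)
    · refine ⟨d, ?_⟩
      intro j i h
      dsimp only at h
      by_cases hv : j ∈ insert t (D₀ \ A)
      · rw [if_pos hv] at h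
        exact hd j i h
      · rw [if_neg hv] at h; exact absurd h (by simp)
    · rw [← hc]
      apply congrArg Finset.card
      ext z
      simp only [mem_filter]
      constructor
      · rintro ⟨hz, hznone⟩
        rw [if_pos hz] at hznone
        refine ⟨?_, hznone⟩
        rcases mem_insert.1 hz with hh | hh
        · exact hh ▸ mem_insert_self _ _
        · exact mem_insert_of_mem (mem_sdiff.1 hh).1
      · rintro ⟨hzU, hznone⟩
        have hzA : z ∉ A := by
          intro hzA
          exact hAne z hzA hznone
        have hz : z ∈ insert t (D₀ \ A) := by
          rcases mem_insert.1 hzU with hh | hh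
          · exact hh ▸ mem_insert_self _ _
          · exact mem_insert_of_mem (mem_sdiff.2 ⟨hh, hzA⟩)
        exact ⟨hz, by rw [if_pos hz]; exact hznone⟩
    · intro v
      by_cases hv : v ∈ insert t (D₀ \ A)
      · rw [if_pos hv]
        intro h
        rcases mem_insert.1 hv with hh | hh
        · exact forest_no_fix ⟨d, hd⟩ t (hh ▸ h)
        · obtain ⟨hvD, hvA⟩ := mem_sdiff.1 hh
          exact hvA (mem_reachSet.2 ⟨hvD, reaches_of_parent h (reaches_self p t)⟩)
      · rw [if_neg hv]; simp
  refine ⟨⟨⟨A, hA⟩, ⟨(fun v => if v ∈ A then p v else none,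
      fun v => if v ∈ A then w v else 0), hx1⟩,
    ⟨(fun v => if v ∈ insert t (D₀ \ A) then p v else none,
      fun v => if v ∈ insert t (D₀ \ A) then w v else 0), hx2⟩⟩, ?_⟩
  apply Subtype.ext
  show ((fun v => if v ∈ A then (if v ∈ A then p v else none)
        else (if v ∈ insert t (D₀ \ A) then p v else none),
      fun v => if v ∈ A then (if v ∈ A then w v else 0)
        else (if v ∈ insert t (D₀ \ A) then w v else 0)) : Base V) = (p, w)
  have hout : ∀ v, v ∉ A → v ∉ insert t (D₀ \ A) → v ∉ insert t D₀ := by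
    intro v hvA hvB hvU
    rcases mem_insert.1 hvU with hh | hh
    · exact hvB (hh ▸ mem_insert_self _ _)
    · exact hvB (mem_insert_of_mem (mem_sdiff.2 ⟨hh, hvA⟩))
  have e1 : (fun v => if v ∈ A then (if v ∈ A then p v else none)
      else (if v ∈ insert t (D₀ \ A) then p v else none)) = p := by
    funext v
    by_cases hv : v ∈ A
    · rw [if_pos hv, if_pos hv]
    · rw [if_neg hv]
      by_cases hvB : v ∈ insert t (D₀ \ A)
      · rw [if_pos hvB]
      · rw [if_neg hvB]
        exact (hs.1 v (hout v hv hvB)).symm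
  have e2 : (fun v => if v ∈ A then (if v ∈ A then w v else 0)
      else (if v ∈ insert t (D₀ \ A) then w v else 0)) = w := by
    funext v
    by_cases hv : v ∈ A
    · rw [if_pos hv, if_pos hv]
    · rw [if_neg hv]
      by_cases hvB : v ∈ insert t (D₀ \ A)
      · rw [if_pos hvB]
      · rw [if_neg hvB]
        exact (hs.2.2 v (hs.1 v (hout v hv hvB))).symm
  rw [e1, e2]

end splitT2

variable (α β : ℕ)

instance finXfun (C D : Finset V) : Finite (Xfun α β C D) := by
  apply finite_subtype (max α β)
  rintro ⟨p, w⟩ ⟨hsupp, hwt, hne⟩ v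
  rcases h : p v with _ | u
  · rw [hsupp.2.2 v h]; exact Nat.zero_le _
  · rcases le_or_gt u v with hc | hc
    · have := ((hwt v u h).1 hc); simp only [mem_Icc] at this
      exact le_trans this.2 (le_max_left _ _)
    · have := ((hwt v u h).2 hc); simp only [mem_Icc] at this
      exact le_trans this.2 (le_max_right _ _)

lemma card_Xfun_empty (C : Finset V) : Nat.card (Xfun α β C ∅) = 1 := by
  rw [Nat.card_eq_one_iff_unique]
  constructor
  · constructor
    rintro ⟨⟨p₁, w₁⟩, hs₁, _, _⟩ ⟨⟨p₂, w₂⟩, hs₂, _, _⟩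
    have hp : ∀ (p : V → Option V) (w : V → ℕ), Supp (∅ : Finset V) C (p, w) →
        p = (fun _ => none) ∧ w = (fun _ => 0) := by
      intro p w hs
      exact ⟨funext fun v => hs.1 v (notMem_empty v),
        funext fun v => hs.2.2 v (hs.1 v (notMem_empty v))⟩
    obtain ⟨e1, e2⟩ := hp p₁ w₁ hs₁
    obtain ⟨e3, e4⟩ := hp p₂ w₂ hs₂
    apply Subtype.ext
    show (p₁, w₁) = (p₂, w₂)
    rw [Prod.mk.injEq]
    exact ⟨e1.trans e3.symm, e2.trans e4.symm⟩
  · exact ⟨⟨(fun _ => none, fun _ => 0),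
      ⟨fun _ _ => rfl, fun v i h => (Option.some_ne_none _ h.symm).elim, fun _ _ => rfl⟩,
      fun j i h => (Option.some_ne_none _ h.symm).elim, fun v hv => absurd hv (notMem_empty v)⟩⟩

section glue
variable {α β} {C D : Finset V} {v₀ : V}

lemma glue_mem (hv₀ : v₀ ∉ D) (u : V) (huC : u ∈ C) (n : ℕ)
    (hn : n ∈ Finset.Icc 1 (if u ≤ v₀ then α else β))
    (p : V → Option V) (ww : V → ℕ)
    (hs : Supp D C (p, ww)) (hwt : WtF α β (p, ww)) (hne : ∀ v ∈ D, p v ≠ none) :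
    Supp (insert v₀ D) C
        ((fun v => if v = v₀ then some u else p v, fun v => if v = v₀ then n else ww v) : Base V) ∧
      WtF α β (fun v => if v = v₀ then some u else p v, fun v => if v = v₀ then n else ww v) ∧
      ∀ v ∈ insert v₀ D,
        ((fun v => if v = v₀ then some u else p v, fun v => if v = v₀ then n else ww v) :
          Base V).1 v ≠ none := by
  simp only [mem_Icc] at hn
  refine ⟨⟨?_, ?_, ?_⟩, ?_, ?_⟩
  · intro v hv
    dsimp only
    have h1 : v ≠ v₀ := fun h => hv (h ▸ mem_insert_self _ _)
    have h2 : v ∉ D := fun h => hv (mem_insert_of_mem h)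
    simp only [h1, if_neg]
    exact hs.1 v h2
  · intro v i h
    dsimp only at h
    by_cases hv : v = v₀
    · rw [if_pos hv] at h
      rwa [← Option.some_inj.1 h]
    · rw [if_neg hv] at h
      exact hs.2.1 v i h
  · intro v h
    dsimp only at h ⊢
    by_cases hv : v = v₀
    · rw [if_pos hv] at h; exact absurd h (by simp)
    · rw [if_neg hv] at h
      simp only [if_neg hv]
      exact hs.2.2 v h
  · intro j i h
    dsimp only at h ⊢
    by_cases hv : j = v₀
    · subst hv
      rw [if_pos rfl] at h
      have hi : i = u := by simpa using h.symm
      subst hi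
      rw [if_pos rfl]
      constructor
      · intro hc
        rw [if_pos hc] at hn
        simp only [mem_Icc]; omega
      · intro hc
        rw [if_neg (not_le.2 hc)] at hn
        simp only [mem_Icc]; omega
    · rw [if_neg hv] at h
      simp only [if_neg hv]
      exact hwt j i h
  · intro v hv
    dsimp only
    rcases mem_insert.1 hv with h | h
    · simp [h]
    · have hvne : v ≠ v₀ := fun hh => hv₀ (hh ▸ h)
      simp only [hvne, if_neg]
      exact hne v h

noncomputable def glue (hv₀ : v₀ ∉ D) :
    ((Σ u : {u // u ∈ C}, Fin (if (u : V) ≤ v₀ then α else β)) × Xfun α β C D) →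
      Xfun α β C (insert v₀ D) :=
  fun x =>
    ⟨(fun v => if v = v₀ then some (x.1.1 : V) else x.2.1.1 v,
      fun v => if v = v₀ then (x.1.2 : ℕ) + 1 else x.2.1.2 v),
      glue_mem hv₀ (x.1.1 : V) x.1.1.2 ((x.1.2 : ℕ) + 1)
        (by simp only [mem_Icc]
            refine ⟨by omega, ?_⟩
            have := x.1.2.isLt
            omega)
        x.2.1.1 x.2.1.2 x.2.2.1 x.2.2.2.1 (fun v hv => x.2.2.2.2 v hv)⟩

lemma glue_bijective (hv₀ : v₀ ∉ D) (hv₀C : v₀ ∈ C) :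
    Function.Bijective (glue (α := α) (β := β) (C := C) hv₀) := by
  constructor
  · rintro ⟨⟨⟨u₁, hu₁⟩, w₁⟩, ⟨⟨p₁, ww₁⟩, hx₁⟩⟩ ⟨⟨⟨u₂, hu₂⟩, w₂⟩, ⟨⟨p₂, ww₂⟩, hx₂⟩⟩ h
    have h1 := congrArg (fun z : Xfun α β C (insert v₀ D) => z.1.1) h
    have h2 := congrArg (fun z : Xfun α β C (insert v₀ D) => z.1.2) h
    dsimp only [glue] at h1 h2
    have hu : u₁ = u₂ := by
      have := congrFun h1 v₀; simpa using this
    subst hu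
    have hw : (w₁ : ℕ) = (w₂ : ℕ) := by
      have := congrFun h2 v₀; simpa using this
    have hwe : w₁ = w₂ := Fin.ext hw
    subst hwe
    have hp : p₁ = p₂ := by
      funext v
      by_cases hv : v = v₀
      · have e₁ : p₁ v₀ = none := hx₁.1.1 v₀ hv₀
        have e₂ : p₂ v₀ = none := hx₂.1.1 v₀ hv₀
        rw [hv, e₁, e₂]
      · have := congrFun h1 v; simpa [hv] using this
    have hww : ww₁ = ww₂ := by
      funext v
      by_cases hv : v = v₀
      · have e₁ : ww₁ v₀ = 0 := hx₁.1.2.2 v₀ (hx₁.1.1 v₀ hv₀)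
        have e₂ : ww₂ v₀ = 0 := hx₂.1.2.2 v₀ (hx₂.1.1 v₀ hv₀)
        rw [hv, e₁, e₂]
      · have := congrFun h2 v; simpa [hv] using this
    subst hp; subst hww
    rfl
  · rintro ⟨⟨p, w⟩, hs, hwt, hne⟩
    rcases hu : p v₀ with _ | u
    · exact absurd hu (hne v₀ (mem_insert_self _ _))
    have huC : u ∈ C := hs.2.1 v₀ u hu
    have hwv : 1 ≤ w v₀ ∧ w v₀ ≤ (if u ≤ v₀ then α else β) := by
      by_cases hc : u ≤ v₀
      · rw [if_pos hc]; simpa [mem_Icc] using (hwt v₀ u hu).1 hc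
      · rw [if_neg hc]; simpa [mem_Icc] using (hwt v₀ u hu).2 (lt_of_not_ge hc)
    have hrest : Supp D C ((fun v => if v = v₀ then none else p v,
        fun v => if v = v₀ then 0 else w v) : Base V) ∧
        WtF α β (fun v => if v = v₀ then none else p v, fun v => if v = v₀ then 0 else w v) ∧
        ∀ v ∈ D, (if v = v₀ then none else p v) ≠ none := by
      refine ⟨⟨?_, ?_, ?_⟩, ?_, ?_⟩
      · intro v hv
        dsimp only
        by_cases h : v = v₀
        · simp [h]
        · simp only [h, if_neg]
          exact hs.1 v (by simp [h, hv])
      · intro v i h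
        dsimp only at h
        by_cases hv : v = v₀
        · rw [if_pos hv] at h; exact absurd h (by simp)
        · rw [if_neg hv] at h
          exact hs.2.1 v i h
      · intro v h
        dsimp only at h ⊢
        by_cases hv : v = v₀
        · simp [hv]
        · rw [if_neg hv] at h
          simp only [if_neg hv]
          exact hs.2.2 v h
      · intro j i h
        dsimp only at h ⊢
        by_cases hv : j = v₀
        · rw [if_pos hv] at h; exact absurd h (by simp)
        · rw [if_neg hv] at h
          simp only [if_neg hv]
          exact hwt j i h
      · intro v hv
        have hvne : v ≠ v₀ := fun h => hv₀ (h ▸ hv)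
        simp only [hvne, if_neg]
        exact hne v (mem_insert_of_mem hv)
    refine ⟨⟨⟨⟨u, huC⟩, ⟨w v₀ - 1, ?_⟩⟩, ⟨_, hrest⟩⟩, ?_⟩
    · dsimp only
      by_cases hc : u ≤ v₀
      · rw [if_pos hc]; rw [if_pos hc] at hwv; omega
      · rw [if_neg hc]; rw [if_neg hc] at hwv; omega
    · apply Subtype.ext
      show ((fun v => if v = v₀ then some u else if v = v₀ then none else p v,
        fun v => if v = v₀ then (w v₀ - 1) + 1 else if v = v₀ then 0 else w v) : Base V) = (p, w)
      have e1 : (fun v => if v = v₀ then some u else if v = v₀ then none else p v) = p := by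
        funext v
        by_cases hv : v = v₀
        · simp [hv, hu.symm]
        · simp [hv]
      have e2 : (fun v => if v = v₀ then (w v₀ - 1) + 1 else if v = v₀ then 0 else w v) = w := by
        funext v
        by_cases hv : v = v₀
        · subst hv; rw [if_pos rfl]; omega
        · simp [hv]
      rw [e1, e2]

end glue

lemma card_Xfun_insert (C D : Finset V) (v₀ : V) (hv₀ : v₀ ∉ D) (hv₀C : v₀ ∈ C) :
    Nat.card (Xfun α β C (insert v₀ D)) =
      ((C.filter (fun u => u ≤ v₀)).card * α + (C.filter (fun u => ¬ u ≤ v₀)).card * β) *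
        Nat.card (Xfun α β C D) := by
  classical
  rw [← Nat.card_congr (Equiv.ofBijective _ (glue_bijective (α := α) (β := β) hv₀ hv₀C))]
  rw [Nat.card_prod]
  congr 1
  rw [Nat.card_eq_fintype_card, Fintype.card_sigma]
  simp only [Fintype.card_fin]
  rw [Finset.sum_coe_sort C (fun u => if u ≤ v₀ then α else β)]
  rw [Finset.sum_ite, Finset.sum_const, Finset.sum_const, smul_eq_mul, smul_eq_mul]

lemma card_Xfun (C : Finset V) :
    ∀ D : Finset V, D ⊆ C → Nat.card (Xfun α β C D) =
      ∏ j ∈ D, ((C.filter (fun u => u ≤ j)).card * α +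
        (C.filter (fun u => ¬ u ≤ j)).card * β) := by
  classical
  intro D
  induction D using Finset.induction_on with
  | empty => intro _; simpa using card_Xfun_empty α β C
  | @insert v₀ D hv ih =>
    intro hsub
    rw [card_Xfun_insert α β C D v₀ hv (hsub (mem_insert_self _ _)),
      Finset.prod_insert hv, ih (fun x hx => hsub (mem_insert_of_mem hx))]


lemma wt_bound {pw : Base V} (hz : ∀ v, pw.1 v = none → pw.2 v = 0)
    (hwt : WtT α β pw) (hf : Forest pw.1) : ∀ v, pw.2 v ≤ max α β := by
  intro v
  rcases h : pw.1 v with _ | u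
  · rw [hz v h]; exact Nat.zero_le _
  · rcases lt_trichotomy u v with hc | hc | hc
    · have := (hwt v u h).1 hc; simp only [mem_Icc] at this
      exact le_trans this.2 (le_max_left _ _)
    · exact absurd h (hc ▸ forest_no_fix hf v)
    · have := (hwt v u h).2 hc; simp only [mem_Icc] at this
      exact le_trans this.2 (le_max_right _ _)

instance finTreeOn (S : Finset V) : Finite (TreeOn α β S) := by
  apply finite_subtype (max α β)
  rintro pw ⟨hs, hwt, hf, _⟩
  exact wt_bound α β hs.2.2 hwt hf

instance finTreeLeaf (t : V) (D : Finset V) : Finite (TreeLeaf α β t D) := by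
  apply finite_subtype (max α β)
  rintro pw ⟨hs, hwt, hf, _⟩
  exact wt_bound α β hs.2.2 hwt hf

lemma reaches_child {p : V → Option V} {u : V} :
    ∀ {k : ℕ} {v : V}, (pstar p)^[k] v = u → v ≠ u → ∃ x, p x = some u := by
  intro k
  induction k with
  | zero => intro v h hne; exact absurd h hne
  | succ k ih =>
    intro v h hne
    rw [Function.iterate_succ_apply'] at h
    rcases hy : p ((pstar p)^[k] v) with _ | z
    · have : (pstar p)^[k] v = u := by rwa [pstar, hy] at h
      exact ih this hne
    · have : z = u := by rwa [pstar, hy] at h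
      exact ⟨(pstar p)^[k] v, this ▸ hy⟩

lemma card_TreeLeaf_empty (t : V) : Nat.card (TreeLeaf α β t (∅ : Finset V)) = 1 := by
  rw [Nat.card_eq_one_iff_unique]
  constructor
  · constructor
    rintro ⟨⟨p₁, w₁⟩, hs₁, _, _, hc₁, _⟩ ⟨⟨p₂, w₂⟩, hs₂, _, _, hc₂, _⟩
    have key : ∀ (p : V → Option V) (w : V → ℕ), Supp (insert t ∅) (insert t ∅) (p, w) →
        (Finset.filter (fun v => p v = none) (insert t (∅ : Finset V))).card = 1 →
        p = (fun _ => none) ∧ w = (fun _ => 0) := by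
      intro p w hs hc
      have hpt : p t = none := by
        by_contra hne
        rw [filter_insert, if_neg hne, filter_empty] at hc
        simp at hc
      have hp : p = fun _ => none := by
        funext v
        by_cases hv : v = t
        · rw [hv]; exact hpt
        · exact hs.1 v (by simp [hv])
      exact ⟨hp, funext fun v => hs.2.2 v (by rw [hp])⟩
    obtain ⟨e1, e2⟩ := key p₁ w₁ hs₁ hc₁
    obtain ⟨e3, e4⟩ := key p₂ w₂ hs₂ hc₂
    apply Subtype.ext
    show (p₁, w₁) = (p₂, w₂)
    rw [Prod.mk.injEq]
    exact ⟨e1.trans e3.symm, e2.trans e4.symm⟩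
  · refine ⟨⟨(fun _ => none, fun _ => 0),
      ⟨fun _ _ => rfl, fun v i h => (Option.some_ne_none _ h.symm).elim, fun _ _ => rfl⟩,
      fun j i h => (Option.some_ne_none _ h.symm).elim, ⟨fun _ => 0, fun j i h => (Option.some_ne_none _ h.symm).elim⟩,
      ?_, fun v h => by cases h⟩⟩
    rw [filter_insert, if_pos rfl, filter_empty]
    simp

section leafglue
variable {α β} {t : V} {D : Finset V}

lemma leafglue_mem (ht : t ∉ D) (hmax : ∀ v ∈ D, v < t) (q : V) (hq : q ∈ D) (n : ℕ)
    (hn : n ∈ Finset.Icc 1 α) (p : V → Option V) (w : V → ℕ)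
    (hx : Supp D D (p, w) ∧ WtT α β (p, w) ∧ Forest p ∧
      (D.filter (fun v => p v = none)).card = 1) :
    Supp (insert t D) (insert t D)
        ((fun v => if v = t then some q else p v, fun v => if v = t then n else w v) : Base V) ∧
      WtT α β (fun v => if v = t then some q else p v, fun v => if v = t then n else w v) ∧
      Forest (fun v => if v = t then some q else p v) ∧
      ((insert t D).filter
        (fun v => (if v = t then some q else p v) = none)).card = 1 ∧
      ∀ v, (if v = t then some q else p v) ≠ some t := by
  obtain ⟨hs, hwt, hf, hc⟩ := hx
  simp only [mem_Icc] at hn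
  have htarget : ∀ v i, p v = some i → i ∈ D := hs.2.1
  refine ⟨⟨?_, ?_, ?_⟩, ?_, ?_, ?_, ?_⟩
  · intro v hv
    dsimp only
    have h1 : v ≠ t := fun h => hv (h ▸ mem_insert_self _ _)
    rw [if_neg h1]
    exact hs.1 v (fun h => hv (mem_insert_of_mem h))
  · intro v i h
    dsimp only at h
    by_cases hv : v = t
    · rw [if_pos hv] at h
      rw [← Option.some_inj.1 h]
      exact mem_insert_of_mem hq
    · rw [if_neg hv] at h
      exact mem_insert_of_mem (htarget v i h)
  · intro v h
    dsimp only at h ⊢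
    by_cases hv : v = t
    · rw [if_pos hv] at h; exact absurd h (by simp)
    · rw [if_neg hv] at h ⊢
      exact hs.2.2 v h
  · intro j i h
    dsimp only at h ⊢
    by_cases hv : j = t
    · subst hv
      rw [if_pos rfl] at h ⊢
      have hi : i = q := by simpa using h.symm
      subst hi
      constructor
      · intro _; simp only [mem_Icc]; omega
      · intro hlt; exact absurd hlt (not_lt.2 (le_of_lt (hmax i hq)))
    · rw [if_neg hv] at h ⊢
      exact hwt j i h
  · obtain ⟨d, hd⟩ := hf
    refine ⟨fun v => if v = t then d q + 1 else d v, ?_⟩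
    intro j i h
    dsimp only at h ⊢
    by_cases hv : j = t
    · subst hv
      rw [if_pos rfl] at h
      have hi : i = q := by simpa using h.symm
      have hit : i ≠ j := by rw [hi]; exact fun hh => ht (hh ▸ hq)
      rw [if_pos rfl, if_neg hit, hi]
      omega
    · rw [if_neg hv] at h
      have hiD : i ∈ D := htarget j i h
      have hit : i ≠ t := fun hh => ht (hh ▸ hiD)
      rw [if_neg hv, if_neg hit]
      exact hd j i h
  · rw [filter_insert, if_neg (by simp)]
    rw [← hc]
    apply congrArg Finset.card
    apply filter_congr
    intro v hv
    have : v ≠ t := fun h => ht (h ▸ hv)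
    simp [this]
  · intro v
    by_cases hv : v = t
    · rw [if_pos hv]
      intro h
      have : q = t := by simpa using h
      exact ht (this ▸ hq)
    · rw [if_neg hv]
      intro h
      exact ht (htarget v t h)

end leafglue

section leafglue2
variable {α β : ℕ} {t : V} {D : Finset V}

noncomputable def leafglue (ht : t ∉ D) (hmax : ∀ v ∈ D, v < t) :
    (({q // q ∈ D} × Fin α) × TreeOn α β D) → TreeLeaf α β t D :=
  fun x =>
    ⟨(fun v => if v = t then some (x.1.1.1 : V) else x.2.1.1 v,
      fun v => if v = t then (x.1.2 : ℕ) + 1 else x.2.1.2 v),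
      leafglue_mem ht hmax (x.1.1.1 : V) x.1.1.2 ((x.1.2 : ℕ) + 1)
        (by simp only [mem_Icc]; exact ⟨by omega, x.1.2.isLt⟩)
        x.2.1.1 x.2.1.2 x.2.2⟩

lemma leafglue_bijective (ht : t ∉ D) (hmax : ∀ v ∈ D, v < t) (hD : D.Nonempty) :
    Function.Bijective (leafglue (α := α) (β := β) ht hmax) := by
  constructor
  · rintro ⟨⟨⟨q₁, hq₁⟩, w₁⟩, ⟨⟨p₁, ww₁⟩, hx₁⟩⟩ ⟨⟨⟨q₂, hq₂⟩, w₂⟩, ⟨⟨p₂, ww₂⟩, hx₂⟩⟩ h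
    have h1 := congrArg (fun z : TreeLeaf α β t D => z.1.1) h
    have h2 := congrArg (fun z : TreeLeaf α β t D => z.1.2) h
    dsimp only [leafglue] at h1 h2
    have hq : q₁ = q₂ := by
      have := congrFun h1 t; simpa using this
    subst hq
    have hw : (w₁ : ℕ) = (w₂ : ℕ) := by
      have := congrFun h2 t; simpa using this
    have hwe : w₁ = w₂ := Fin.ext hw
    subst hwe
    have hptn : p₁ t = none := hx₁.1.1 t ht
    have hptn2 : p₂ t = none := hx₂.1.1 t ht
    have hp : p₁ = p₂ := by
      funext v
      by_cases hv : v = t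
      · rw [hv, hptn, hptn2]
      · have := congrFun h1 v; simpa [hv] using this
    have hww : ww₁ = ww₂ := by
      funext v
      by_cases hv : v = t
      · have e₁ : ww₁ t = 0 := hx₁.1.2.2 t hptn
        have e₂ : ww₂ t = 0 := hx₂.1.2.2 t hptn2
        rw [hv, e₁, e₂]
      · have := congrFun h2 v; simpa [hv] using this
    subst hp; subst hww
    rfl
  · rintro ⟨⟨p, w⟩, hs, hwt, hf, hc, hnc⟩
    obtain ⟨v₀, hv₀⟩ := hD
    have htarget : ∀ v i, p v = some i → i ∈ insert t D := fun v i h => hs.2.1 v i h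
    have hpt : p t ≠ none := by
      intro hptn
      obtain ⟨r, hr, hrnone, hreach⟩ :=
        reaches_root hf (fun v _ i h => htarget v i h) (mem_insert_of_mem hv₀)
      by_cases hrt : r = t
      · subst hrt
        obtain ⟨k, hk⟩ := hreach
        have hne : v₀ ≠ r := fun h => ht (h ▸ hv₀)
        obtain ⟨x, hx⟩ := reaches_child hk hne
        exact hnc x hx
      · have hsub : ({t, r} : Finset V) ⊆
            (insert t D).filter (fun v => p v = none) := by
          intro z hz
          rcases mem_insert.1 hz with hz | hz
          · subst hz; exact mem_filter.2 ⟨mem_insert_self _ _, hptn⟩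
          · rw [mem_singleton.1 hz]; exact mem_filter.2 ⟨hr, hrnone⟩
        have hcard := card_le_card hsub
        rw [hc, card_insert_of_notMem (by simpa using fun h => hrt h.symm),
          card_singleton] at hcard
        omega
    rcases hq : p t with _ | q
    · exact absurd hq hpt
    have hqD : q ∈ D := by
      rcases mem_insert.1 (htarget t q hq) with h | h
      · exact absurd hq (h ▸ forest_no_fix hf t)
      · exact h
    have hwt' : w t ∈ Finset.Icc 1 α := (hwt t q hq).1 (hmax q hqD)
    simp only [mem_Icc] at hwt'
    have hrest : Supp D D ((fun v => if v = t then none else p v,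
          fun v => if v = t then 0 else w v) : Base V) ∧
        WtT α β (fun v => if v = t then none else p v, fun v => if v = t then 0 else w v) ∧
        Forest (fun v => if v = t then none else p v) ∧
        (D.filter (fun v => (if v = t then none else p v) = none)).card = 1 := by
      refine ⟨⟨?_, ?_, ?_⟩, ?_, ?_, ?_⟩
      · intro v hv
        dsimp only
        by_cases h : v = t
        · simp [h]
        · rw [if_neg h]
          exact hs.1 v (by simp [h, hv])
      · intro v i h
        dsimp only at h
        by_cases hv : v = t
        · rw [if_pos hv] at h; exact absurd h (by simp)
        · rw [if_neg hv] at h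
          rcases mem_insert.1 (htarget v i h) with hh | hh
          · exact absurd h (hh ▸ hnc v)
          · exact hh
      · intro v h
        dsimp only at h ⊢
        by_cases hv : v = t
        · simp [hv]
        · rw [if_neg hv] at h ⊢
          exact hs.2.2 v h
      · intro j i h
        dsimp only at h ⊢
        by_cases hv : j = t
        · rw [if_pos hv] at h; exact absurd h (by simp)
        · rw [if_neg hv] at h ⊢
          exact hwt j i h
      · obtain ⟨d, hd⟩ := hf
        refine ⟨d, ?_⟩
        intro j i h
        dsimp only at h
        by_cases hv : j = t
        · rw [if_pos hv] at h; exact absurd h (by simp)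
        · rw [if_neg hv] at h
          exact hd j i h
      · rw [filter_insert, if_neg (by simpa using hpt)] at hc
        rw [← hc]
        apply congrArg Finset.card
        apply filter_congr
        intro v hv
        have : v ≠ t := fun h => ht (h ▸ hv)
        simp [this]
    refine ⟨⟨⟨⟨q, hqD⟩, ⟨w t - 1, by omega⟩⟩, ⟨_, hrest⟩⟩, ?_⟩
    apply Subtype.ext
    show ((fun v => if v = t then some q else if v = t then none else p v,
      fun v => if v = t then (w t - 1) + 1 else if v = t then 0 else w v) : Base V) = (p, w)
    have e1 : (fun v => if v = t then some q else if v = t then none else p v) = p := by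
      funext v
      by_cases hv : v = t
      · rw [if_pos hv, hv, hq]
      · rw [if_neg hv, if_neg hv]
    have e2 : (fun v => if v = t then (w t - 1) + 1 else if v = t then 0 else w v) = w := by
      funext v
      by_cases hv : v = t
      · rw [if_pos hv, hv]; omega
      · rw [if_neg hv, if_neg hv]
    rw [e1, e2]

end leafglue2

lemma card_TreeLeaf (α β : ℕ) (t : V) (D : Finset V) (ht : t ∉ D) (hmax : ∀ v ∈ D, v < t)
    (hD : D.Nonempty) :
    Nat.card (TreeLeaf α β t D) = D.card * α * Nat.card (TreeOn α β D) := by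
  rw [← Nat.card_congr (Equiv.ofBijective _ (leafglue_bijective (α := α) (β := β) ht hmax hD))]
  rw [Nat.card_prod, Nat.card_prod]
  congr 2
  · rw [Nat.card_eq_fintype_card, Fintype.card_coe]
  · rw [Nat.card_eq_fintype_card, Fintype.card_fin]

lemma prod_rank (α β : ℕ) (t : V) (D : Finset V) (ht : t ∉ D) (hmax : ∀ v ∈ D, v < t) :
    ∏ j ∈ D, (((insert t D).filter (fun u => u ≤ j)).card * α +
        ((insert t D).filter (fun u => ¬ u ≤ j)).card * β) =
      ∏ i ∈ Icc 1 D.card, (i * α + (D.card + 1 - i) * β) := by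
  classical
  set C := insert t D with hC
  have hCcard : C.card = D.card + 1 := card_insert_of_notMem ht
  set r : V → ℕ := fun j => (C.filter (fun u => u ≤ j)).card with hr
  have hmono : ∀ a ∈ D, ∀ b ∈ D, a < b → r a < r b := by
    intro a _ b hb hab
    apply card_lt_card
    constructor
    · intro z hz
      simp only [mem_filter] at hz ⊢
      exact ⟨hz.1, le_trans hz.2 (le_of_lt hab)⟩
    · intro hsub
      have hbmem : b ∈ C.filter (fun u => u ≤ b) :=
        mem_filter.2 ⟨mem_insert_of_mem hb, le_refl b⟩
      have := hsub hbmem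
      simp only [mem_filter] at this
      exact absurd this.2 (not_le.2 hab)
  have hinj : ∀ a ∈ D, ∀ b ∈ D, r a = r b → a = b := by
    intro a ha b hb hab
    rcases lt_trichotomy a b with h | h | h
    · exact absurd hab (Nat.ne_of_lt (hmono a ha b hb h))
    · exact h
    · exact absurd hab.symm (Nat.ne_of_lt (hmono b hb a ha h))
  have hmem : ∀ j ∈ D, r j ∈ Icc 1 D.card := by
    intro j hj
    simp only [mem_Icc]
    constructor
    · rw [Nat.one_le_iff_ne_zero, ← Nat.pos_iff_ne_zero, card_pos]
      exact ⟨j, mem_filter.2 ⟨mem_insert_of_mem hj, le_refl j⟩⟩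
    · have hsub : C.filter (fun u => u ≤ j) ⊆ D := by
        intro z hz
        simp only [mem_filter, hC, mem_insert] at hz
        rcases hz.1 with h | h
        · exact absurd (h ▸ hz.2) (not_le.2 (hmax j hj))
        · exact h
      exact card_le_card hsub
  have hcardIcc : (Icc 1 D.card).card = D.card := by
    rw [Nat.card_Icc]; omega
  have hsurj : ∀ i ∈ Icc 1 D.card, ∃ j, ∃ hj : j ∈ D, r j = i := by
    have := Finset.surj_on_of_inj_on_of_card_le (s := D) (t := Icc 1 D.card)
      (f := fun j _ => r j) (fun j hj => hmem j hj) (fun a₁ a₂ ha₁ ha₂ h => hinj a₁ ha₁ a₂ ha₂ h)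
      (le_of_eq hcardIcc)
    intro i hi
    obtain ⟨j, hj, hji⟩ := this i hi
    exact ⟨j, hj, hji.symm⟩
  apply Finset.prod_bij (i := fun j hj => r j) hmem hinj hsurj
  intro j hj
  have hcompl : (C.filter (fun u => ¬ u ≤ j)).card = D.card + 1 - r j := by
    have := Finset.card_filter_add_card_filter_not
      (s := C) (p := fun u => u ≤ j)
    rw [hCcard] at this
    have hrj : (C.filter (fun u => u ≤ j)).card = r j := rfl
    omega
  rw [hcompl]

instance finTreeR (t : V) (D : Finset V) : Finite (TreeR α β t D) := by
  apply finite_subtype (max α β)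
  rintro pw ⟨hs, hwt, hf, _, _⟩
  exact wt_bound α β hs.2.2 hwt hf

lemma card_sigma_sub (D₀ : Finset V) (F G : Finset V → Type)
    [hF : ∀ A : Finset V, Finite (F A)] [hG : ∀ A : Finset V, Finite (G A)] :
    Nat.card (Σ A : {A : Finset V // A ⊆ D₀}, F A × G A)
      = ∑ A ∈ D₀.powerset, Nat.card (F A) * Nat.card (G A) := by
  classical
  letI : ∀ A : {A : Finset V // A ⊆ D₀}, Fintype (F A × G A) := fun A => Fintype.ofFinite _
  rw [Nat.card_eq_fintype_card, Fintype.card_sigma]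
  rw [Finset.sum_subtype D₀.powerset (fun A => Finset.mem_powerset)
    (fun A => Nat.card (F A) * Nat.card (G A))]
  apply Finset.sum_congr rfl
  intro A _
  rw [← Nat.card_eq_fintype_card, Nat.card_prod]

lemma card_split_T (t : V) (D₀ : Finset V) (ht : t ∉ D₀) :
    Nat.card (TreeOn α β (insert t D₀)) =
      ∑ A ∈ D₀.powerset, Nat.card (TreeR α β t A) * Nat.card (TreeLeaf α β t (D₀ \ A)) := by
  rw [← Nat.card_congr (Equiv.ofBijective _
    ⟨glueT_injective (α := α) (β := β) ht, glueT_surjective ht⟩)]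
  exact card_sigma_sub D₀ (fun A => TreeR α β t A) (fun A => TreeLeaf α β t (D₀ \ A))

lemma card_split_X (t : V) (D₀ : Finset V) (ht : t ∉ D₀) :
    Nat.card (Xfun α β (insert t D₀) D₀) =
      ∑ A ∈ D₀.powerset, Nat.card (TreeR α β t A) * Nat.card (Xfun α β (D₀ \ A) (D₀ \ A)) := by
  rw [← Nat.card_congr (Equiv.ofBijective _
    ⟨glueF_injective (α := α) (β := β) ht, glueF_surjective ht⟩)]
  exact card_sigma_sub D₀ (fun A => TreeR α β t A) (fun A => Xfun α β (D₀ \ A) (D₀ \ A))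

theorem card_TreeOn_eq (S : Finset V) :
    S.Nonempty → Nat.card (TreeOn α β S) =
      ∏ i ∈ Icc 1 (S.card - 1), (i * α + (S.card - i) * β) := by
  induction S using Finset.strongInduction with
  | _ S ih =>
  intro hS
  classical
  set t := S.max' hS with htdef
  set D₀ := S.erase t with hD₀
  have htD : t ∉ D₀ := notMem_erase _ _
  have hins : insert t D₀ = S := insert_erase (S.max'_mem hS)
  have hmax : ∀ v ∈ D₀, v < t := fun v hv =>
    lt_of_le_of_ne (S.le_max' v (mem_of_mem_erase hv)) (ne_of_mem_erase hv)
  have hScard : S.card = D₀.card + 1 := by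
    rw [← hins, card_insert_of_notMem htD]
  have h1 : Nat.card (TreeOn α β S) =
      ∑ A ∈ D₀.powerset, Nat.card (TreeR α β t A) * Nat.card (TreeLeaf α β t (D₀ \ A)) := by
    rw [← hins]
    exact card_split_T α β t D₀ htD
  have h2 : Nat.card (Xfun α β (insert t D₀) D₀) =
      ∑ A ∈ D₀.powerset, Nat.card (TreeR α β t A) * Nat.card (Xfun α β (D₀ \ A) (D₀ \ A)) :=
    card_split_X α β t D₀ htD
  have h3 : ∀ A ∈ D₀.powerset,
      Nat.card (TreeLeaf α β t (D₀ \ A)) = Nat.card (Xfun α β (D₀ \ A) (D₀ \ A)) := by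
    intro A hA
    set D' := D₀ \ A with hD'
    rcases D'.eq_empty_or_nonempty with hD'e | hD'ne
    · rw [hD'e, card_TreeLeaf_empty, card_Xfun_empty]
    · have hD'sub : D' ⊆ D₀ := sdiff_subset
      have htD' : t ∉ D' := fun h => htD (hD'sub h)
      have hmax' : ∀ v ∈ D', v < t := fun v hv => hmax v (hD'sub hv)
      have hssub : D' ⊂ S := by
        refine (Finset.ssubset_iff_of_subset (hD'sub.trans (erase_subset _ _))).2 ?_
        exact ⟨t, S.max'_mem hS, htD'⟩
      have hL : Nat.card (TreeLeaf α β t D') = D'.card * α * Nat.card (TreeOn α β D') :=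
        card_TreeLeaf α β t D' htD' hmax' hD'ne
      have hIH : Nat.card (TreeOn α β D') =
          ∏ i ∈ Icc 1 (D'.card - 1), (i * α + (D'.card - i) * β) := ih D' hssub hD'ne
      set t' := D'.max' hD'ne with ht'def
      set D'' := D'.erase t' with hD''def
      have ht'D'' : t' ∉ D'' := notMem_erase _ _
      have hins' : insert t' D'' = D' := insert_erase (D'.max'_mem hD'ne)
      have hmax'' : ∀ v ∈ D'', v < t' := fun v hv =>
        lt_of_le_of_ne (D'.le_max' v (mem_of_mem_erase hv)) (ne_of_mem_erase hv)
      have hD''card : D'.card = D''.card + 1 := by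
        rw [← hins', card_insert_of_notMem ht'D'']
      have hfull : D'.filter (fun u => u ≤ t') = D' :=
        filter_true_of_mem (fun x hx => D'.le_max' x hx)
      have hemptyf : D'.filter (fun u => ¬ u ≤ t') = ∅ :=
        filter_false_of_mem (fun x hx h => h (D'.le_max' x hx))
      have hR : Nat.card (Xfun α β D' D') = D'.card * α * Nat.card (Xfun α β D' D'') := by
        have hstep := card_Xfun_insert α β D' D'' t' ht'D'' (D'.max'_mem hD'ne)
        rw [hins'] at hstep
        rw [hfull, hemptyf] at hstep
        simpa [mul_assoc] using hstep
      have hR2 : Nat.card (Xfun α β D' D'') =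
          ∏ i ∈ Icc 1 D''.card, (i * α + (D''.card + 1 - i) * β) := by
        rw [← hins']
        rw [card_Xfun α β (insert t' D'') D''
          (by rw [hins']; exact erase_subset _ _)]
        exact prod_rank α β t' D'' ht'D'' hmax''
      rw [hL, hIH, hR, hR2]
      congr 1
      have e1 : D'.card - 1 = D''.card := by omega
      rw [e1]
      apply Finset.prod_congr rfl
      intro i hi
      have e2 : D'.card - i = D''.card + 1 - i := by omega
      rw [e2]
  have h4 : ∑ A ∈ D₀.powerset, Nat.card (TreeR α β t A) * Nat.card (TreeLeaf α β t (D₀ \ A))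
      = ∑ A ∈ D₀.powerset, Nat.card (TreeR α β t A) * Nat.card (Xfun α β (D₀ \ A) (D₀ \ A)) :=
    Finset.sum_congr rfl (fun A hA => by rw [h3 A hA])
  rw [h1, h4, ← h2]
  rw [card_Xfun α β (insert t D₀) D₀ (subset_insert t D₀)]
  rw [prod_rank α β t D₀ htD hmax]
  have e1 : S.card - 1 = D₀.card := by omega
  rw [e1]
  apply Finset.prod_congr rfl
  intro i hi
  have e2 : S.card - i = D₀.card + 1 - i := by omega
  rw [e2]

end AB

lemma filter_card_congr {γ : Type} {p q : γ → Prop} (hpq : ∀ a, p a ↔ q a)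
    (i1 : DecidablePred p) (i2 : DecidablePred q) (s : Finset γ) :
    (@Finset.filter _ p i1 s).card = (@Finset.filter _ q i2 s).card := by
  have hpq' : p = q := funext fun a => propext (hpq a)
  subst hpq'
  have : i1 = i2 := Subsingleton.elim i1 i2
  rw [this]

noncomputable def treeEquiv (n α β : ℕ) :
    AB.TreeOn α β (Finset.univ : Finset (Fin n)) ≃ ABTree n α β where
  toFun x := ⟨⟨x.1, x.2.2.2.1, fun j h => x.2.1.2.2 j h,
      fun j i h => x.2.2.1 j i h⟩, by
    have hx := x.2.2.2.2
    exact (filter_card_congr (fun a => Iff.rfl) _ _ _).trans hx⟩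
  invFun y := ⟨y.1.1,
    ⟨⟨fun v hv => absurd (Finset.mem_univ v) hv, fun v i h => Finset.mem_univ i,
      y.1.2.2.1⟩, fun j i h => y.1.2.2.2 j i h, y.1.2.1, by
      have hy := y.2
      exact (filter_card_congr (fun a => Iff.rfl) _ _ _).trans hy⟩⟩
  left_inv x := Subtype.ext rfl
  right_inv y := Subtype.ext (Subtype.ext rfl)

/-- The number of (α,β)-rooted labelled trees on n vertices equals
∏_{i=1}^{n-1} (nβ + (α−β)i). -/
theorem abTree_count (n α β : ℕ) (hn : 1 ≤ n) :
    (Nat.card (ABTree n α β) : ℤ) =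
      ∏ i ∈ Finset.Icc 1 (n - 1), ((n : ℤ) * β + ((α : ℤ) - β) * i) := by
  classical
  have h0 : Nat.card (ABTree n α β)
      = Nat.card (AB.TreeOn α β (Finset.univ : Finset (Fin n))) :=
    (Nat.card_congr (treeEquiv n α β)).symm
  have huniv : (Finset.univ : Finset (Fin n)).Nonempty :=
    ⟨⟨0, hn⟩, Finset.mem_univ _⟩
  have h1 := AB.card_TreeOn_eq α β (Finset.univ : Finset (Fin n)) huniv
  rw [Finset.card_univ, Fintype.card_fin] at h1
  rw [h0, h1, Nat.cast_prod]
  apply Finset.prod_congr rfl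
  intro i hi
  simp only [Finset.mem_Icc] at hi
  have hin : i ≤ n := le_trans hi.2 (Nat.sub_le n 1)
  push_cast [Nat.cast_sub hin]
  ring
end

section
/- The number of rooted labelled forests on vertex set {1,...,n} (forests of rooted trees) equals (n+1)^{n−1}. -/
open Finset


/-- Colored forests: each vertex either has a parent (`inl`) or is a root with a color (`inr`). -/
private def CF (V C : Type) : Type :=
  { p : V → V ⊕ C // ∃ d : V → ℕ, ∀ j i, p j = Sum.inl i → d i < d j }

private lemma CF_isEmpty (V C : Type) [Finite V] [Nonempty V] [IsEmpty C] :
    IsEmpty (CF V C) := by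
  constructor
  rintro ⟨p, d, hd⟩
  cases nonempty_fintype V
  obtain ⟨v, -, hv⟩ := Finset.exists_min_image Finset.univ d ⟨Classical.arbitrary V, mem_univ _⟩
  rcases h : p v with w | c
  · exact absurd (hv w (mem_univ w)) (not_le.2 (hd v w h))
  · exact isEmptyElim c

private lemma CF_unique (V C : Type) [IsEmpty V] : Nat.card (CF V C) = 1 := by
  have : Unique (CF V C) := {
    default := ⟨fun v => isEmptyElim v, ⟨fun _ => 0, fun j => isEmptyElim j⟩⟩
    uniq := fun x => Subtype.ext (funext fun v => isEmptyElim v) }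
  exact Nat.card_unique

private def rs {V C : Type} [Fintype V] (x : CF V C) : Finset V :=
  Finset.univ.filter (fun v => (x.1 v).isRight)

variable {V C : Type} [Fintype V] [DecidableEq V]

private def gfun (S : Finset V) (c : ↥S → C)
    (q : ↥(Sᶜ : Finset V) → ↥(Sᶜ : Finset V) ⊕ ↥S) : V → V ⊕ C :=
  fun v =>
    if h : v ∈ (Sᶜ : Finset V) then
      Sum.inl ((q ⟨v, h⟩).elim Subtype.val Subtype.val)
    else Sum.inr (c ⟨v, by simpa using h⟩)

private lemma gfun_forest (S : Finset V) (c : ↥S → C) (q : CF ↥(Sᶜ : Finset V) ↥S) :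
    ∃ d : V → ℕ, ∀ j i, gfun S c q.1 j = Sum.inl i → d i < d j := by
  obtain ⟨d', hd'⟩ := q.2
  refine ⟨fun v => if h : v ∈ (Sᶜ : Finset V) then d' ⟨v, h⟩ + 1 else 0, ?_⟩
  intro j i hji
  unfold gfun at hji
  split at hji
  case isTrue hj =>
    have hqi := Sum.inl.inj hji
    rcases hq : q.1 ⟨j, hj⟩ with w | s
    · rw [hq] at hqi
      rw [Sum.elim_inl] at hqi
      subst hqi
      simp only [dif_pos w.2, dif_pos hj]
      simpa [Subtype.coe_eta] using Nat.succ_lt_succ (hd' ⟨j, hj⟩ w hq)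
    · rw [hq] at hqi
      rw [Sum.elim_inr] at hqi
      subst hqi
      have hns : ¬((s : V) ∈ (Sᶜ : Finset V)) := by simp [s.2]
      simp only [dif_neg hns, dif_pos hj]
      exact Nat.succ_pos _
  case isFalse hj => exact absurd hji (by simp)

private lemma gfun_rs (S : Finset V) (c : ↥S → C) (q : CF ↥(Sᶜ : Finset V) ↥S) :
    rs (⟨gfun S c q.1, gfun_forest S c q⟩ : CF V C) = S := by
  ext v
  simp only [rs, mem_filter, mem_univ, true_and, gfun]
  by_cases h : v ∈ (Sᶜ : Finset V)
  · have h' : v ∉ S := by simpa using h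
    simp only [h', iff_false]
    erw [Finset.mem_filter]
    simp [h]
  · have h' : v ∈ S := by simpa using h
    simp only [h', iff_true]
    erw [Finset.mem_filter]
    simp [h]

private def G (S : Finset V) : ((↥S → C) × CF ↥(Sᶜ : Finset V) ↥S) → {x : CF V C // rs x = S} :=
  fun cq => ⟨⟨gfun S cq.1 cq.2.1, gfun_forest S cq.1 cq.2⟩, gfun_rs S cq.1 cq.2⟩

private lemma G_inj (S : Finset V) : Function.Injective (G (V := V) (C := C) S) := by
  rintro ⟨c, q⟩ ⟨c', q'⟩ h
  have hg : gfun S c q.1 = gfun S c' q'.1 := congrArg (fun x => x.1.1) h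
  have hc : c = c' := by
    funext s
    have hs := congrFun hg ↑s
    have hns : ¬((s : V) ∈ (Sᶜ : Finset V)) := by simp [s.2]
    simp only [gfun, dif_neg hns, Subtype.coe_eta] at hs
    exact Sum.inr.inj hs
  have hq : q = q' := by
    apply Subtype.ext
    funext v
    have hs := congrFun hg ↑v
    simp only [gfun, dif_pos v.2, Subtype.coe_eta] at hs
    have he := Sum.inl.inj hs
    rcases h1 : q.1 v with w | s <;> rcases h2 : q'.1 v with w' | s' <;>
      rw [h1, h2] at he <;> simp only [Sum.elim_inl, Sum.elim_inr] at he
    · rw [Subtype.ext he]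
    · exact absurd (he ▸ w.2) (by simp [s'.2])
    · exact absurd (he ▸ w'.2) (by simp [s.2])
    · rw [Subtype.ext he]
  rw [Prod.ext_iff]; exact ⟨hc, hq⟩

private lemma G_surj (S : Finset V) : Function.Surjective (G (V := V) (C := C) S) := by
  rintro ⟨⟨p, hpf⟩, hrs⟩
  have hS : ∀ v, v ∈ S → ∃ cc, p v = Sum.inr cc := by
    intro v hv
    rw [← hrs] at hv
    simp only [rs, mem_filter] at hv
    exact Sum.isRight_iff.mp hv.2
  have hSc : ∀ v, v ∈ (Sᶜ : Finset V) → ∃ w, p v = Sum.inl w := by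
    intro v hv
    have hv' : v ∉ S := by simpa using hv
    rw [← hrs] at hv'
    simp only [rs, mem_filter, mem_univ, true_and] at hv'
    exact Sum.isLeft_iff.mp (Sum.not_isRight.mp hv')
  set c : ↥S → C := fun s => (hS s s.2).choose with hc
  set q : ↥(Sᶜ : Finset V) → ↥(Sᶜ : Finset V) ⊕ ↥S := fun v =>
    if h : (hSc v v.2).choose ∈ S then Sum.inr ⟨(hSc v v.2).choose, h⟩
    else Sum.inl ⟨(hSc v v.2).choose, by simpa using h⟩ with hqdef
  have hqf : ∃ d : ↥(Sᶜ : Finset V) → ℕ, ∀ j i, q j = Sum.inl i → d i < d j := by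
    obtain ⟨d, hd⟩ := hpf
    refine ⟨fun v => d ↑v, ?_⟩
    intro j i hji
    rw [hqdef] at hji
    dsimp only at hji
    split at hji
    · exact absurd hji (by simp)
    · have := Sum.inl.inj hji
      have hval : (hSc j j.2).choose = ↑i := congrArg Subtype.val this
      have := hd ↑j (hSc j j.2).choose (hSc j j.2).choose_spec
      rwa [hval] at this
  refine ⟨⟨c, ⟨q, hqf⟩⟩, ?_⟩
  apply Subtype.ext
  apply Subtype.ext
  show gfun S c q = p
  funext v
  by_cases h : v ∈ (Sᶜ : Finset V)
  · have hspec := (hSc v h).choose_spec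
    simp only [gfun, dif_pos h, hqdef]
    split
    · rw [Sum.elim_inr]
      exact hspec.symm
    · rw [Sum.elim_inl]
      exact hspec.symm
  · have hv : v ∈ S := by simpa using h
    have hspec := (hS v hv).choose_spec
    simp only [gfun, dif_neg h, hc]
    exact hspec.symm

private lemma fiber_card [Fintype C] (S : Finset V) :
    Nat.card {x : CF V C // rs x = S} =
      Fintype.card C ^ S.card * Nat.card (CF ↥(Sᶜ : Finset V) ↥S) := by
  classical
  rw [← Nat.card_congr (Equiv.ofBijective _ ⟨G_inj (C := C) S, G_surj S⟩), Nat.card_prod]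
  congr 1
  rw [Nat.card_eq_fintype_card, Fintype.card_fun, Fintype.card_coe]

private lemma CF_card_sum [Fintype C] :
    Nat.card (CF V C) =
      ∑ S : Finset V, Fintype.card C ^ S.card * Nat.card (CF ↥(Sᶜ : Finset V) ↥S) := by
  classical
  haveI : Finite (CF V C) := by unfold CF; infer_instance
  haveI : ∀ S : Finset V, Fintype {x : CF V C // rs x = S} := fun S => Fintype.ofFinite _
  rw [Nat.card_congr (Equiv.sigmaFiberEquiv (rs : CF V C → Finset V)).symm,
    Nat.card_eq_fintype_card, Fintype.card_sigma]
  exact Finset.sum_congr rfl fun S _ => by rw [← Nat.card_eq_fintype_card, fiber_card S]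

private lemma binom_id (m r : ℕ) (hm : 1 ≤ m) :
    ∑ k ∈ Finset.range (m + 1), m.choose k * (r ^ k * (k * m ^ (m - k))) =
      r * (m + r) ^ (m - 1) * m := by
  obtain ⟨t, rfl⟩ : ∃ t, m = t + 1 := ⟨m - 1, (Nat.succ_pred_eq_of_pos hm).symm⟩
  rw [Finset.sum_range_succ']
  simp only [Nat.choose_zero_right, pow_zero, Nat.zero_mul, Nat.mul_zero, zero_mul, mul_zero,
    one_mul, mul_one, add_zero, Nat.add_sub_cancel, Nat.add_sub_add_right]
  have hterm : ∀ i, (t + 1).choose (i + 1) * (r ^ (i + 1) * ((i + 1) * (t + 1) ^ (t - i))) =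
      (r * (t + 1)) * (r ^ i * (t + 1) ^ (t - i) * t.choose i) := by
    intro i
    have h1 : (t + 1).choose (i + 1) * (i + 1) = (t + 1) * t.choose i :=
      (Nat.add_one_mul_choose_eq t i).symm
    calc (t + 1).choose (i + 1) * (r ^ (i + 1) * ((i + 1) * (t + 1) ^ (t - i)))
        = ((t + 1).choose (i + 1) * (i + 1)) * (r ^ (i + 1) * (t + 1) ^ (t - i)) := by ring
      _ = ((t + 1) * t.choose i) * (r ^ (i + 1) * (t + 1) ^ (t - i)) := by rw [h1]
      _ = (r * (t + 1)) * (r ^ i * (t + 1) ^ (t - i) * t.choose i) := by ring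
  rw [Finset.sum_congr rfl (fun i _ => hterm i), ← Finset.mul_sum]
  have hap : ∑ i ∈ Finset.range (t + 1), r ^ i * (t + 1) ^ (t - i) * t.choose i
      = (r + (t + 1)) ^ t := by
    rw [add_pow]
    simp
  rw [hap]
  ring

private lemma CF_main : ∀ (m : ℕ) (V C : Type) [Fintype V] [DecidableEq V] [Fintype C],
    Fintype.card V = m →
    Nat.card (CF V C) * (m + Fintype.card C) =
      Fintype.card C * (m + Fintype.card C) ^ m := by
  intro m
  induction m using Nat.strong_induction_on with
  | _ m IH =>
    intro V C _ _ _ hm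
    rcases Nat.eq_zero_or_pos m with rfl | hpos
    · haveI : IsEmpty V := Fintype.card_eq_zero_iff.mp hm
      rw [CF_unique]
      simp
    · set r := Fintype.card C with hr
      have key : Nat.card (CF V C) * m =
          ∑ S : Finset V, r ^ S.card * (S.card * m ^ (m - S.card)) := by
        rw [CF_card_sum, Finset.sum_mul]
        refine Finset.sum_congr rfl fun S _ => ?_
        rw [mul_assoc]
        congr 1
        have hcS : Fintype.card ↥S = S.card := Fintype.card_coe S
        have hk : S.card ≤ m := by
          rw [← hm, ← Finset.card_univ]
          exact Finset.card_le_univ S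
        have hcSc : Fintype.card ↥(Sᶜ : Finset V) = m - S.card := by
          rw [Fintype.card_coe, Finset.card_compl, hm]
        rcases Nat.eq_zero_or_pos S.card with h0 | hS1
        · haveI : IsEmpty ↥S := Fintype.card_eq_zero_iff.mp (by rw [hcS, h0])
          haveI : Nonempty ↥(Sᶜ : Finset V) := Fintype.card_pos_iff.mp (by omega)
          haveI := CF_isEmpty ↥(Sᶜ : Finset V) ↥S
          rw [Nat.card_of_isEmpty, h0]
          simp
        · have hlt : m - S.card < m := by omega
          have hIH := IH (m - S.card) hlt ↥(Sᶜ : Finset V) ↥S hcSc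
          rw [hcS, Nat.sub_add_cancel hk] at hIH
          exact hIH
      have key2 : Nat.card (CF V C) * m = r * (m + r) ^ (m - 1) * m := by
        rw [key, ← Finset.powerset_univ,
          Finset.sum_powerset_apply_card (fun k => r ^ k * (k * m ^ (m - k)))]
        simp only [smul_eq_mul, Finset.card_univ, hm]
        exact binom_id m r hpos
      have hcard : Nat.card (CF V C) = r * (m + r) ^ (m - 1) :=
        Nat.eq_of_mul_eq_mul_right hpos key2
      rw [hcard, mul_assoc, ← pow_succ, Nat.sub_add_cancel hpos]


private def optEquiv (n : ℕ) : Option (Fin n) ≃ (Fin n ⊕ Fin 1) where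
  toFun o := o.elim (Sum.inr 0) Sum.inl
  invFun s := s.elim some (fun _ => none)
  left_inv := by rintro (_ | w) <;> rfl
  right_inv := by
    rintro (w | c)
    · rfl
    · exact congrArg Sum.inr (Subsingleton.elim 0 c)

/-- The number of rooted labelled forests on n vertices equals (n+1)^{n−1}. -/
theorem rootedForest_count (n : ℕ) (hn : 1 ≤ n) :
    Nat.card { p : Fin n → Option (Fin n) // IsForest n p } = (n + 1) ^ (n - 1) := by
  have hkey : ∀ (o : Option (Fin n)) (i : Fin n), optEquiv n o = Sum.inl i ↔ o = some i := by
    rintro (_ | w) i <;> simp [optEquiv]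
  have e : { p : Fin n → Option (Fin n) // IsForest n p } ≃ CF (Fin n) (Fin 1) := by
    refine Equiv.subtypeEquiv (Equiv.arrowCongr (Equiv.refl (Fin n)) (optEquiv n)) fun p => ?_
    show IsForest n p ↔ ∃ d : Fin n → ℕ, ∀ j i, _ = Sum.inl i → d i < d j
    unfold IsForest
    simp only [Equiv.arrowCongr_apply, Equiv.refl_symm, Equiv.refl_apply, Function.comp]
    exact exists_congr fun d => forall₂_congr fun j i =>
      imp_congr (hkey (p j) i).symm Iff.rfl
  have hmain := CF_main n (Fin n) (Fin 1) (Fintype.card_fin n)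
  rw [Fintype.card_fin 1, one_mul] at hmain
  rw [Nat.card_congr e]
  have hpow : (n + 1) ^ n = (n + 1) ^ (n - 1) * (n + 1) := by
    rw [← pow_succ, Nat.sub_add_cancel hn]
  rw [hpow] at hmain
  exact Nat.eq_of_mul_eq_mul_right (Nat.succ_pos n) hmain
end

section
/- For a ≤ b with a+b=1 (i.e., a = 1−b, b ≥ 1), the number of (1−a, b)-rooted labelled forests on n vertices, counted with sign (−1)^{n−j} over the number j of trees and evaluated at q = −1 in absolute value, equals (bn+1)^{n−1}. -/
namespace ShiCount

open Finset Function

variable {n : ℕ}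

abbrev PFun (n : ℕ) := Fin n → Option (Fin n)

/-- ancestor relation: `anc p x y` means `y` is a (weak) ancestor of `x`. -/
def anc (p : PFun n) : Fin n → Fin n → Prop :=
  Relation.ReflTransGen (fun x y => p x = some y)

lemma anc_le {p : PFun n} {d : Fin n → ℕ}
    (hd : ∀ j i : Fin n, p j = some i → d i < d j) {x y : Fin n} (h : anc p x y) :
    d y ≤ d x := by
  induction h with
  | refl => exact le_rfl
  | tail _ hbc ih => exact le_trans (le_of_lt (hd _ _ hbc)) ih

def Es (p : PFun n) : Finset (Fin n) := Finset.univ.filter (fun j => p j ≠ none)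

def Rs (p : PFun n) : Finset (Fin n) := Finset.univ.filter (fun j => p j = none)

@[simp] lemma mem_Es {p : PFun n} {j : Fin n} : j ∈ Es p ↔ p j ≠ none := by
  simp [Es]

@[simp] lemma mem_Rs {p : PFun n} {j : Fin n} : j ∈ Rs p ↔ p j = none := by
  simp [Rs]

open Classical in
noncomputable def sub (p : PFun n) (r : Fin n) : Finset (Fin n) :=
  Finset.univ.filter (fun x => anc p x r)

@[simp] lemma mem_sub {p : PFun n} {r x : Fin n} : x ∈ sub p r ↔ anc p x r := by
  simp [sub]

lemma Rs_eq_compl (p : PFun n) : Rs p = (Es p)ᶜ := by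
  ext j; simp

lemma exists_root {p : PFun n} (hF : IsForest n p) (x : Fin n) :
    ∃ r, anc p x r ∧ p r = none := by
  obtain ⟨d, hd⟩ := hF
  suffices H : ∀ m x, d x ≤ m → ∃ r, anc p x r ∧ p r = none from H (d x) x le_rfl
  intro m
  induction m with
  | zero =>
    intro x hx
    cases hp : p x with
    | none => exact ⟨x, Relation.ReflTransGen.refl, hp⟩
    | some y => exact absurd (hd x y hp) (by omega)
  | succ m ih =>
    intro x hx
    cases hp : p x with
    | none => exact ⟨x, Relation.ReflTransGen.refl, hp⟩
    | some y =>
      obtain ⟨r, hr, hr0⟩ := ih y (by have := hd x y hp; omega)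
      exact ⟨r, Relation.ReflTransGen.head hp hr, hr0⟩

lemma root_unique {p : PFun n} {d : Fin n → ℕ}
    (hd : ∀ j i : Fin n, p j = some i → d i < d j) :
    ∀ x r₁ r₂ : Fin n, anc p x r₁ → p r₁ = none → anc p x r₂ → p r₂ = none → r₁ = r₂ := by
  suffices H : ∀ m (x r₁ r₂ : Fin n), d x ≤ m → anc p x r₁ → p r₁ = none →
      anc p x r₂ → p r₂ = none → r₁ = r₂ from fun x r₁ r₂ => H (d x) x r₁ r₂ le_rfl
  intro m
  induction m with
  | zero =>
    intro x r₁ r₂ hx h₁ h₁' h₂ h₂'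
    rcases h₁.cases_head with rfl | ⟨c, hc, _⟩
    · rcases h₂.cases_head with rfl | ⟨c, hc, _⟩
      · rfl
      · rw [h₁'] at hc; cases hc
    · exact absurd (hd x c hc) (by omega)
  | succ m ih =>
    intro x r₁ r₂ hx h₁ h₁' h₂ h₂'
    cases hp : p x with
    | none =>
      rcases h₁.cases_head with rfl | ⟨c, hc, _⟩
      · rcases h₂.cases_head with rfl | ⟨c, hc, _⟩
        · rfl
        · rw [hp] at hc; cases hc
      · rw [hp] at hc; cases hc
    | some y =>
      have h₁y : anc p y r₁ := by
        rcases h₁.cases_head with rfl | ⟨c, hc, h'⟩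
        · rw [h₁'] at hp; cases hp
        · rw [hp] at hc; cases hc; exact h'
      have h₂y : anc p y r₂ := by
        rcases h₂.cases_head with rfl | ⟨c, hc, h'⟩
        · rw [h₂'] at hp; cases hp
        · rw [hp] at hc; cases hc; exact h'
      exact ih y r₁ r₂ (by have := hd x y hp; omega) h₁y h₁' h₂y h₂'

lemma sum_sub_card {p : PFun n} (hF : IsForest n p) :
    ∑ j ∈ Rs p, (sub p j).card = n := by
  classical
  obtain ⟨d, hd⟩ := hF
  have hdisj : ∀ r₁ ∈ Rs p, ∀ r₂ ∈ Rs p, r₁ ≠ r₂ → Disjoint (sub p r₁) (sub p r₂) := by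
    intro r₁ h₁ r₂ h₂ hne
    rw [Finset.disjoint_left]
    intro x hx₁ hx₂
    exact hne (root_unique hd x r₁ r₂ (mem_sub.mp hx₁) (mem_Rs.mp h₁)
      (mem_sub.mp hx₂) (mem_Rs.mp h₂))
  rw [← Finset.card_biUnion hdisj]
  have huniv : (Rs p).biUnion (sub p) = Finset.univ := by
    ext x
    simp only [Finset.mem_biUnion, Finset.mem_univ, iff_true]
    obtain ⟨r, hr, hr0⟩ := exists_root ⟨d, hd⟩ x
    exact ⟨r, mem_Rs.mpr hr0, mem_sub.mpr hr⟩
  rw [huniv, Finset.card_univ, Fintype.card_fin]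

-- edge update lemmas

lemma isForest_update_none {p : PFun n} (hF : IsForest n p) (j : Fin n) :
    IsForest n (update p j none) := by
  obtain ⟨d, hd⟩ := hF
  refine ⟨d, fun x y hxy => hd x y ?_⟩
  rcases eq_or_ne x j with rfl | hx
  · rw [update_self] at hxy; cases hxy
  · rwa [update_of_ne hx] at hxy

lemma Es_update_none (p : PFun n) (j : Fin n) :
    Es (update p j none) = (Es p).erase j := by
  ext x
  rcases eq_or_ne x j with rfl | hx
  · simp
  · simp [Finset.mem_erase, update_of_ne hx, hx]

lemma Es_update_some (q : PFun n) (j i : Fin n) :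
    Es (update q j (some i)) = insert j (Es q) := by
  ext x
  rcases eq_or_ne x j with rfl | hx
  · simp
  · simp [Finset.mem_insert, update_of_ne hx, hx]

lemma anc_of_update_none {p : PFun n} {j x y : Fin n}
    (h : anc (update p j none) x y) : anc p x y := by
  refine Relation.ReflTransGen.mono ?_ _ _ h
  intro a c hac
  rcases eq_or_ne a j with rfl | ha
  · rw [update_self] at hac; cases hac
  · rwa [update_of_ne ha] at hac

lemma anc_to_update_some {q : PFun n} {j i x y : Fin n} (hj : q j = none)
    (h : anc q x y) : anc (update q j (some i)) x y := by
  refine Relation.ReflTransGen.mono ?_ _ _ h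
  intro a c hac
  have ha : a ≠ j := fun e => by rw [e, hj] at hac; cases hac
  rwa [update_of_ne ha]

lemma isForest_update_some {q : PFun n} (hF : IsForest n q) {j i : Fin n}
    (hni : ¬ anc q i j) : IsForest n (update q j (some i)) := by
  classical
  obtain ⟨d, hd⟩ := hF
  refine ⟨fun x => if anc q x j then d x + (d i + 1) else d x, ?_⟩
  intro x y hxy
  dsimp only
  rcases eq_or_ne x j with rfl | hx
  · rw [update_self] at hxy
    cases hxy
    rw [if_neg hni, if_pos (show anc q x x from Relation.ReflTransGen.refl)]
    omega
  · rw [update_of_ne hx] at hxy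
    by_cases hax : anc q x j
    · have hay : anc q y j := by
        rcases hax.cases_head with rfl | ⟨c, hc, h'⟩
        · exact absurd rfl hx
        · rw [hxy] at hc; cases hc; exact h'
      rw [if_pos hax, if_pos hay]
      have := hd x y hxy; omega
    · have hay : ¬ anc q y j := fun h => hax (Relation.ReflTransGen.head hxy h)
      rw [if_neg hax, if_neg hay]
      exact hd x y hxy


open Classical in
noncomputable def FE (n e : ℕ) : Finset (PFun n) :=
  Finset.univ.filter (fun p => IsForest n p ∧ (Es p).card = e)

@[simp] lemma mem_FE {e : ℕ} {p : PFun n} :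
    p ∈ FE n e ↔ IsForest n p ∧ (Es p).card = e := by
  simp [FE]

lemma card_step (n e : ℕ) :
    (e + 1) * (FE n (e + 1)).card = n * (n - e - 1) * (FE n e).card := by
  classical
  have hP : ((FE n (e + 1)).sigma (fun p => Es p)).card = (e + 1) * (FE n (e + 1)).card := by
    rw [Finset.card_sigma,
      Finset.sum_congr rfl (fun p hp => ((mem_FE.mp hp).2 : (Es p).card = e + 1)),
      Finset.sum_const, smul_eq_mul, mul_comm]
  have hQ : ((FE n e).sigma (fun q => (Rs q).sigma (fun j => (sub q j)ᶜ))).card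
      = n * (n - e - 1) * (FE n e).card := by
    rw [Finset.card_sigma]
    have hq1 : ∀ q ∈ FE n e,
        ((Rs q).sigma (fun j => (sub q j)ᶜ)).card = n * (n - e - 1) := by
      intro q hq
      obtain ⟨hF, hcard⟩ := mem_FE.mp hq
      rw [Finset.card_sigma]
      have h1 : ∀ j ∈ Rs q, ((sub q j)ᶜ).card = n - (sub q j).card := by
        intro j _
        rw [Finset.card_compl, Fintype.card_fin]
      rw [Finset.sum_congr rfl h1,
        Finset.sum_tsub_distrib _ (fun j _ => by
          simpa using Finset.card_le_univ (sub q j)),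
        sum_sub_card hF, Finset.sum_const, smul_eq_mul]
      have hR : (Rs q).card = n - e := by
        rw [Rs_eq_compl, Finset.card_compl, Fintype.card_fin, hcard]
      rw [hR, Nat.mul_sub n (n - e) 1, mul_one, mul_comm n (n - e)]
    rw [Finset.sum_congr rfl hq1, Finset.sum_const, smul_eq_mul, mul_comm]
  rw [← hP, ← hQ]
  refine Finset.card_bij
    (fun a _ => ⟨update a.1 a.2 none, ⟨a.2, (a.1 a.2).getD a.2⟩⟩) ?_ ?_ ?_
  · -- maps to
    rintro ⟨p, j⟩ ha
    rw [Finset.mem_sigma] at ha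
    obtain ⟨hp, hj⟩ := ha
    obtain ⟨hF, hcard⟩ := mem_FE.mp hp
    obtain ⟨i, hi⟩ : ∃ i, p j = some i := by
      cases hpj : p j with
      | none => exact absurd hpj (mem_Es.mp hj)
      | some i => exact ⟨i, rfl⟩
    simp only [Finset.mem_sigma]
    refine ⟨mem_FE.mpr ⟨isForest_update_none hF j, ?_⟩, ?_, ?_⟩
    · rw [Es_update_none, Finset.card_erase_of_mem hj, hcard]
      omega
    · simp [mem_Rs]
    · rw [Finset.mem_compl, mem_sub]
      intro hanc
      obtain ⟨d, hd⟩ := hF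
      have h1 : anc p ((p j).getD j) j := anc_of_update_none hanc
      rw [hi] at h1
      have h2 := anc_le hd h1
      have h3 := hd j i hi
      simp at h1 h2
      omega
  · -- injective
    rintro ⟨p₁, j₁⟩ h₁ ⟨p₂, j₂⟩ h₂ heq
    rw [Finset.mem_sigma] at h₁ h₂
    obtain ⟨i₁, hi₁⟩ : ∃ i, p₁ j₁ = some i := by
      cases hpj : p₁ j₁ with
      | none => exact absurd hpj (mem_Es.mp h₁.2)
      | some i => exact ⟨i, rfl⟩
    obtain ⟨i₂, hi₂⟩ : ∃ i, p₂ j₂ = some i := by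
      cases hpj : p₂ j₂ with
      | none => exact absurd hpj (mem_Es.mp h₂.2)
      | some i => exact ⟨i, rfl⟩
    have hupd : update p₁ j₁ none = update p₂ j₂ none :=
      congrArg Sigma.fst heq
    have hj : j₁ = j₂ := congrArg (fun a => a.2.1) heq
    subst hj
    have hgd : (p₁ j₁).getD j₁ = (p₂ j₁).getD j₁ := congrArg (fun a => a.2.2) heq
    have hp : p₁ = p₂ := by
      funext x
      rcases eq_or_ne x j₁ with rfl | hx
      · rw [hi₁, hi₂]
        rw [hi₁, hi₂] at hgd
        simpa using hgd
      · have := congrFun hupd x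
        rwa [update_of_ne hx, update_of_ne hx] at this
    subst hp
    rfl
  · -- surjective
    rintro ⟨q, j, i⟩ hb
    rw [Finset.mem_sigma] at hb
    obtain ⟨hq, hji⟩ := hb
    rw [Finset.mem_sigma] at hji
    obtain ⟨hj, hi⟩ := hji
    obtain ⟨hF, hcard⟩ := mem_FE.mp hq
    have hjnone : q j = none := mem_Rs.mp hj
    have hni : ¬ anc q i j := by
      rw [Finset.mem_compl, mem_sub] at hi; exact hi
    refine ⟨⟨update q j (some i), j⟩, ?_, ?_⟩
    · rw [Finset.mem_sigma]
      constructor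
      · refine mem_FE.mpr ⟨isForest_update_some hF hni, ?_⟩
        rw [Es_update_some, Finset.card_insert_of_notMem (by simp [hjnone]), hcard]
      · simp
    · have h1 : update (update q j (some i)) j none = q := by
        funext x
        rcases eq_or_ne x j with rfl | hx
        · rw [update_self, hjnone]
        · rw [update_of_ne hx, update_of_ne hx]
      have h2 : ((update q j (some i)) j).getD j = i := by
        rw [update_self]; rfl
      refine Sigma.ext h1 (heq_of_eq ?_)
      simp


lemma FE_zero (n : ℕ) : FE n 0 = {fun _ => none} := by
  ext p
  simp only [mem_FE, Finset.mem_singleton, Finset.card_eq_zero]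
  constructor
  · rintro ⟨_, hE⟩
    funext j
    by_contra h
    have : j ∈ Es p := mem_Es.mpr h
    rw [hE] at this
    exact absurd this (Finset.notMem_empty j)
  · rintro rfl
    refine ⟨⟨fun _ => 0, fun j i h => by cases h⟩, ?_⟩
    ext j; simp

lemma card_FE (n e : ℕ) : (FE n e).card = (n - 1).choose e * n ^ e := by
  induction e with
  | zero => rw [FE_zero]; simp
  | succ e ih =>
    have h := card_step n e
    rw [ih] at h
    have h2 : (e + 1) * ((n - 1).choose (e + 1) * n ^ (e + 1))
        = n * (n - e - 1) * ((n - 1).choose e * n ^ e) := by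
      have hc := Nat.choose_succ_right_eq (n - 1) e
      have hs : n - e - 1 = n - 1 - e := by omega
      rw [hs]
      calc (e + 1) * ((n - 1).choose (e + 1) * n ^ (e + 1))
          = ((n - 1).choose (e + 1) * (e + 1)) * n ^ (e + 1) := by ring
        _ = ((n - 1).choose e * (n - 1 - e)) * n ^ (e + 1) := by rw [hc]
        _ = n * (n - 1 - e) * ((n - 1).choose e * n ^ e) := by rw [pow_succ]; ring
    exact Nat.eq_of_mul_eq_mul_left (Nat.succ_pos e) (h.trans h2.symm)


lemma weight_bounds {n b : ℕ} (t : ABForest n b b) {j i : Fin n}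
    (h : t.1.1 j = some i) : 1 ≤ t.1.2 j ∧ t.1.2 j ≤ b := by
  obtain ⟨hF, h0, hw⟩ := t.2
  obtain ⟨d, hd⟩ := hF
  have hlt := hd j i h
  have hij : (i : ℕ) ≠ (j : ℕ) := by
    intro e
    have : i = j := Fin.ext e
    rw [this] at hlt
    exact lt_irrefl _ hlt
  rcases Nat.lt_or_ge (i : ℕ) (j : ℕ) with h1 | h1
  · have := (hw j i h).1 h1
    rw [Finset.mem_Icc] at this
    exact this
  · have h2 : (j : ℕ) < (i : ℕ) := by omega
    have := (hw j i h).2 h2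
    rw [Finset.mem_Icc] at this
    exact this

noncomputable def abEquiv (n b : ℕ) :
    ABForest n b b ≃ Σ p : {p : PFun n // IsForest n p}, ({j : Fin n // p.1 j ≠ none} → Fin b) where
  toFun t := ⟨⟨t.1.1, t.2.1⟩, fun j => ⟨t.1.2 j.1 - 1, by
    obtain ⟨i, hi⟩ : ∃ i, t.1.1 j.1 = some i := by
      cases hpj : t.1.1 j.1 with
      | none => exact absurd hpj j.2
      | some i => exact ⟨i, rfl⟩
    have := weight_bounds t hi
    omega⟩⟩
  invFun s := ⟨(s.1.1, fun j => if h : s.1.1 j = none then 0 else (s.2 ⟨j, h⟩ : ℕ) + 1),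
    s.1.2,
    fun j hj => dif_pos hj,
    fun j i hji => by
      dsimp only at hji ⊢
      have hne : s.1.1 j ≠ none := by rw [hji]; exact fun h => by cases h
      rw [dif_neg hne]
      have := (s.2 ⟨j, hne⟩).isLt
      constructor <;> intro _ <;> rw [Finset.mem_Icc] <;> omega⟩
  left_inv t := by
    obtain ⟨⟨p, w⟩, hF, h0, hw⟩ := t
    refine Subtype.ext (Prod.ext rfl ?_)
    funext j
    dsimp only
    by_cases hj : p j = none
    · rw [dif_pos hj]
      exact (h0 j hj).symm
    · rw [dif_neg hj]
      obtain ⟨i, hi⟩ : ∃ i, p j = some i := by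
        cases hpj : p j with
        | none => exact absurd hpj hj
        | some i => exact ⟨i, rfl⟩
      have := weight_bounds ⟨⟨p, w⟩, hF, h0, hw⟩ hi
      simp only at this ⊢
      omega
  right_inv s := by
    obtain ⟨⟨p, hp⟩, W⟩ := s
    refine Sigma.ext rfl (heq_of_eq ?_)
    funext j
    apply Fin.ext
    dsimp only
    rw [dif_neg (show p j.1 ≠ none from j.2), Nat.add_sub_cancel]

open Classical in
noncomputable def Forests (n : ℕ) : Finset (PFun n) :=
  Finset.univ.filter (fun p => IsForest n p)

@[simp] lemma mem_Forests {p : PFun n} : p ∈ Forests n ↔ IsForest n p := by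
  simp [Forests]

lemma card_ab (n b : ℕ) :
    Nat.card (ABForest n b b) = ∑ p ∈ Forests n, b ^ (Es p).card := by
  classical
  rw [Nat.card_congr (abEquiv n b), Nat.card_eq_fintype_card, Fintype.card_sigma,
    Finset.sum_subtype (Forests n) (fun p => mem_Forests) (fun p => b ^ (Es p).card)]
  refine Finset.sum_congr rfl fun p _ => ?_
  rw [Fintype.card_fun, Fintype.card_fin]
  congr 1
  rw [Fintype.card_subtype]
  congr 1


lemma binomial_sum (n b : ℕ) (hn : 1 ≤ n) :
    ∑ e ∈ Finset.range (n + 1), (n - 1).choose e * (b * n) ^ e = (b * n + 1) ^ (n - 1) := by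
  rw [Finset.sum_range_succ, Nat.choose_eq_zero_of_lt (by omega : n - 1 < n), zero_mul, add_zero]
  rw [add_pow]
  rw [show n - 1 + 1 = n from by omega]
  refine Finset.sum_congr rfl fun k _ => ?_
  simp [Nat.cast_id, mul_comm]

end ShiCount

/-- For a + b = 1 (so α = 1 − a = b, β = b), the total number of (b,b)-rooted
labelled forests on n vertices equals (bn+1)^{n−1}. -/
theorem abForest_shi_count (n b : ℕ) (hn : 1 ≤ n) (hb : 1 ≤ b) :
    Nat.card (ABForest n b b) = (b * n + 1) ^ (n - 1) := by
  classical
  open ShiCount in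
  rw [ShiCount.card_ab n b]
  rw [← ShiCount.binomial_sum n b hn]
  have hmap : ∀ p ∈ ShiCount.Forests n, (ShiCount.Es p).card ∈ Finset.range (n + 1) := by
    intro p _
    rw [Finset.mem_range]
    have := Finset.card_le_univ (ShiCount.Es p)
    rw [Fintype.card_fin] at this
    omega
  rw [← Finset.sum_fiberwise_of_maps_to hmap]
  refine Finset.sum_congr rfl fun e _ => ?_
  have hfe : (ShiCount.Forests n).filter (fun p => (ShiCount.Es p).card = e) = ShiCount.FE n e := by
    ext p
    simp [ShiCount.Forests, ShiCount.FE]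
  rw [Finset.sum_congr hfe (fun p hp => by rw [(ShiCount.mem_FE.mp hp).2]),
    Finset.sum_const, ShiCount.card_FE, smul_eq_mul, mul_pow]
  ring
end

section
/- For b ≥ 0 and n ≥ 1, the total number of (b+1, b)-rooted labelled forests on n vertices equals (bn+2)(bn+3)⋯(bn+n). -/
namespace ABAux

/-- one step of the parent map -/
def Step {n : ℕ} (p : Fin n → Option (Fin n)) (a b : Fin n) : Prop := p a = some b

/-- reachability along parent pointers -/
def Reaches {n : ℕ} (p : Fin n → Option (Fin n)) : Fin n → Fin n → Prop :=
  Relation.ReflTransGen (Step p)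

theorem exists_root {n : ℕ} (p : Fin n → Option (Fin n)) (h : IsForest n p) (j : Fin n) :
    ∃ r, Reaches p j r ∧ p r = none := by
  obtain ⟨d, hd⟩ := h
  suffices H : ∀ k j, d j < k → ∃ r, Reaches p j r ∧ p r = none from H (d j + 1) j (Nat.lt_succ_self _)
  intro k
  induction k with
  | zero => intro j hj; omega
  | succ k ih =>
    intro j hj
    cases hp : p j with
    | none => exact ⟨j, Relation.ReflTransGen.refl, hp⟩
    | some i =>
      have hlt := hd j i hp
      obtain ⟨r, hr, hr0⟩ := ih i (by omega)
      exact ⟨r, Relation.ReflTransGen.head hp hr, hr0⟩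

noncomputable def rootF {n : ℕ} (p : Fin n → Option (Fin n)) (h : IsForest n p) (j : Fin n) :
    Fin n := (exists_root p h j).choose

theorem rootF_reaches {n : ℕ} {p : Fin n → Option (Fin n)} (h : IsForest n p) (j : Fin n) :
    Reaches p j (rootF p h j) := (exists_root p h j).choose_spec.1

theorem rootF_is_root {n : ℕ} {p : Fin n → Option (Fin n)} (h : IsForest n p) (j : Fin n) :
    p (rootF p h j) = none := (exists_root p h j).choose_spec.2

theorem reaches_det {n : ℕ} {p : Fin n → Option (Fin n)} {a b c : Fin n}
    (hab : Reaches p a b) (hac : Reaches p a c) : Reaches p b c ∨ Reaches p c b := by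
  revert hac
  induction hab using Relation.ReflTransGen.head_induction_on with
  | refl => exact fun hac => Or.inl hac
  | @head x y hxy hyb ih =>
    intro hac
    rcases Relation.ReflTransGen.cases_head hac with rfl | ⟨y', hxy', hy'c⟩
    · exact Or.inr (Relation.ReflTransGen.head hxy hyb)
    · have hyy : y = y' := by
        have := hxy.symm.trans hxy'
        exact Option.some.inj this
      exact ih (hyy ▸ hy'c)

theorem reaches_none {n : ℕ} {p : Fin n → Option (Fin n)} {b c : Fin n}
    (hb : p b = none) (h : Reaches p b c) : c = b := by
  rcases Relation.ReflTransGen.cases_head h with rfl | ⟨c', hbc', _⟩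
  · rfl
  · rw [Step, hb] at hbc'; cases hbc'

theorem rootF_eq {n : ℕ} {p : Fin n → Option (Fin n)} (h : IsForest n p) {j r : Fin n}
    (hr : Reaches p j r) (h0 : p r = none) : rootF p h j = r := by
  rcases reaches_det hr (rootF_reaches h j) with H | H
  · exact reaches_none h0 H
  · exact (reaches_none (rootF_is_root h j) H).symm

theorem rootF_none {n : ℕ} {p : Fin n → Option (Fin n)} (h : IsForest n p) {j : Fin n}
    (hp : p j = none) : rootF p h j = j := rootF_eq h Relation.ReflTransGen.refl hp

theorem rootF_some {n : ℕ} {p : Fin n → Option (Fin n)} (h : IsForest n p) {j i : Fin n}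
    (hp : p j = some i) : rootF p h j = rootF p h i :=
  rootF_eq h (Relation.ReflTransGen.head hp (rootF_reaches h i)) (rootF_is_root h i)

theorem reaches_d_le {n : ℕ} {p : Fin n → Option (Fin n)} {d : Fin n → ℕ}
    (hd : ∀ j i, p j = some i → d i < d j) {a b : Fin n} (h : Reaches p a b) : d b ≤ d a := by
  induction h with
  | refl => exact le_refl _
  | tail hstep hlast ih => exact le_trans (le_of_lt (hd _ _ hlast)) ih

theorem no_self_loop {n : ℕ} {p : Fin n → Option (Fin n)} (h : IsForest n p) (j : Fin n) :
    p j ≠ some j := by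
  obtain ⟨d, hd⟩ := h
  intro hp
  exact absurd (hd j j hp) (lt_irrefl _)

/-- Forests with roots colored in `[0,q)` and edges weighted `[1,α]` ascending,
`[1,β]` descending. -/
def RF (n q a b : ℕ) : Type :=
  { pw : (Fin n → Option (Fin n)) × (Fin n → ℕ) //
    IsForest n pw.1 ∧ (∀ j, pw.1 j = none → pw.2 j < q) ∧
    ∀ j i, pw.1 j = some i →
      ((i : ℕ) < (j : ℕ) → pw.2 j ∈ Finset.Icc 1 a) ∧
      ((j : ℕ) < (i : ℕ) → pw.2 j ∈ Finset.Icc 1 b) }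

theorem wbound {n q a b : ℕ} (x : RF n q a b) (j : Fin n) : x.1.2 j < q + a + b + 1 := by
  rcases hp : x.1.1 j with _ | i
  · have := x.2.2.1 j hp; omega
  · have hij : (i : ℕ) ≠ (j : ℕ) := by
      intro he
      exact no_self_loop x.2.1 j (by rwa [show i = j from Fin.ext he] at hp)
    rcases Nat.lt_or_ge (i : ℕ) (j : ℕ) with h | h
    · have := (x.2.2.2 j i hp).1 h; simp [Finset.mem_Icc] at this; omega
    · have hji : (j : ℕ) < (i : ℕ) := by omega
      have := (x.2.2.2 j i hp).2 hji; simp [Finset.mem_Icc] at this; omega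

instance {n q a b : ℕ} : Finite (RF n q a b) := by
  apply Finite.of_injective
    (fun x : RF n q a b =>
      ((x.1.1, fun j => (⟨x.1.2 j, wbound x j⟩ : Fin (q + a + b + 1))) :
        (Fin n → Option (Fin n)) × (Fin n → Fin (q + a + b + 1))))
  intro x y hxy
  simp only at hxy
  injection hxy with h1 h2
  have h2 : ∀ j, x.1.2 j = y.1.2 j := by
    intro j
    have := congrFun h2 j
    exact congrArg Fin.val this
  apply Subtype.ext
  exact Prod.ext h1 (funext h2)

end ABAux

namespace ABAux

instance RF0unique {q a b : ℕ} : Unique (RF 0 q a b) where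
  default := ⟨(fun j => j.elim0, fun j => j.elim0),
    ⟨fun j => j.elim0, fun j => j.elim0⟩, fun j => j.elim0, fun j => j.elim0⟩
  uniq := by
    intro x
    apply Subtype.ext
    exact Prod.ext (funext fun j => j.elim0) (funext fun j => j.elim0)

instance RFq0empty {n a b : ℕ} : IsEmpty (RF (n + 1) 0 a b) := by
  constructor
  intro x
  have h := x.2.2.1 (rootF x.1.1 x.2.1 0) (rootF_is_root x.2.1 0)
  omega

/-- recolor a root -/
def recolor {n q a b : ℕ} (x : RF n q a b) (r : Fin n) (hr : x.1.1 r = none)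
    (v : ℕ) (hv : v < q) : RF n q a b := by
  refine ⟨(x.1.1, Function.update x.1.2 r v), x.2.1, ?_, ?_⟩
  · intro j hj
    show Function.update x.1.2 r v j < q
    rcases eq_or_ne j r with rfl | hne
    · rwa [Function.update_self]
    · rw [Function.update_of_ne hne]
      exact x.2.2.1 j hj
  · intro j i hj
    have hjr : j ≠ r := by rintro rfl; exact absurd hj (by rw [hr]; simp)
    show (_ → Function.update x.1.2 r v j ∈ _) ∧ (_ → Function.update x.1.2 r v j ∈ _)
    rw [Function.update_of_ne hjr]
    exact x.2.2.2 j i hj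

@[simp] theorem recolor_p {n q a b : ℕ} (x : RF n q a b) (r : Fin n) (hr : x.1.1 r = none)
    (v : ℕ) (hv : v < q) : (recolor x r hr v hv).1.1 = x.1.1 := rfl

@[simp] theorem recolor_w {n q a b : ℕ} (x : RF n q a b) (r : Fin n) (hr : x.1.1 r = none)
    (v : ℕ) (hv : v < q) : (recolor x r hr v hv).1.2 = Function.update x.1.2 r v := rfl

/-- the "error" objects -/
def EB (n q a b : ℕ) : Type :=
  { z : (Fin n × Fin a × Fin b) × RF n (q + b) a b //
    z.2.1.2 (rootF z.2.1.1 z.2.2.1 z.1.1) = 0 }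

instance {n q a b : ℕ} : Finite (EB n q a b) := Subtype.finite

section Ext

variable {n q a b : ℕ}

/-- extended parent map on `Fin (n+1)`: `t` is the parent choice of the new last
vertex; roots with color `≥ q` become children of the last vertex. -/
def extP (p' : Fin n → Option (Fin n)) (w' : Fin n → ℕ) (q : ℕ) (t : Option (Fin n)) :
    Fin (n + 1) → Option (Fin (n + 1)) :=
  Fin.lastCases (t.map Fin.castSucc)
    (fun j => (p' j).elim (if q ≤ w' j then some (Fin.last n) else none)
      (fun i => some i.castSucc))

def extW (p' : Fin n → Option (Fin n)) (w' : Fin n → ℕ) (q : ℕ) (v : ℕ) : Fin (n + 1) → ℕ :=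
  Fin.lastCases v
    (fun j => if p' j = none ∧ q ≤ w' j then w' j - q + 1 else w' j)

@[simp] theorem extP_last (p' : Fin n → Option (Fin n)) (w' : Fin n → ℕ) (q : ℕ)
    (t : Option (Fin n)) : extP p' w' q t (Fin.last n) = t.map Fin.castSucc :=
  Fin.lastCases_last

@[simp] theorem extP_castSucc (p' : Fin n → Option (Fin n)) (w' : Fin n → ℕ) (q : ℕ)
    (t : Option (Fin n)) (j : Fin n) :
    extP p' w' q t j.castSucc =
      (p' j).elim (if q ≤ w' j then some (Fin.last n) else none) (fun i => some i.castSucc) :=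
  Fin.lastCases_castSucc j

@[simp] theorem extW_last (p' : Fin n → Option (Fin n)) (w' : Fin n → ℕ) (q v : ℕ) :
    extW p' w' q v (Fin.last n) = v := Fin.lastCases_last

@[simp] theorem extW_castSucc (p' : Fin n → Option (Fin n)) (w' : Fin n → ℕ) (q v : ℕ)
    (j : Fin n) :
    extW p' w' q v j.castSucc = if p' j = none ∧ q ≤ w' j then w' j - q + 1 else w' j :=
  Fin.lastCases_castSucc j

theorem ext_isForest (x : RF n (q + b) a b) (t : Option (Fin n))
    (ht : ∀ i, t = some i → x.1.2 (rootF x.1.1 x.2.1 i) < q) :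
    IsForest (n + 1) (extP x.1.1 x.1.2 q t) := by
  obtain ⟨d, hd⟩ := x.2.1
  obtain ⟨dL, hdL⟩ : ∃ dL : ℕ, (t = none → dL = 0) ∧ ∀ i, t = some i → dL = d i + 1 := by
    rcases t with _ | i₀
    · refine ⟨0, fun _ => rfl, fun i h => ?_⟩
      cases h
    · refine ⟨d i₀ + 1, fun h => ?_, fun i h => ?_⟩
      · cases h
      · rw [Option.some.inj h]
  refine ⟨Fin.lastCases dL
    (fun j => d j + (if q ≤ x.1.2 (rootF x.1.1 x.2.1 j) then dL + 1 else 0)), ?_⟩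
  intro j i hji
  induction j using Fin.lastCases with
  | last =>
    rw [extP_last] at hji
    rcases ht' : t with _ | i₀
    · rw [ht'] at hji; cases hji
    · rw [ht'] at hji
      have : i = i₀.castSucc := by cases hji; rfl
      subst this
      simp only [Fin.lastCases_castSucc, Fin.lastCases_last]
      have h1 := ht i₀ ht'
      have h2 := hdL.2 i₀ ht'
      rw [if_neg (by omega)]
      omega
  | cast j' =>
    rw [extP_castSucc] at hji
    rcases hp : x.1.1 j' with _ | i'
    · rw [hp] at hji
      simp only [Option.elim_none] at hji
      by_cases hq : q ≤ x.1.2 j'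
      · rw [if_pos hq] at hji
        have : i = Fin.last n := by cases hji; rfl
        subst this
        simp only [Fin.lastCases_last, Fin.lastCases_castSucc]
        rw [rootF_none x.2.1 hp, if_pos hq]
        omega
      · rw [if_neg hq] at hji; cases hji
    · rw [hp] at hji
      simp only [Option.elim_some] at hji
      have : i = i'.castSucc := by cases hji; rfl
      subst this
      simp only [Fin.lastCases_castSucc]
      rw [rootF_some x.2.1 hp]
      have := hd j' i' hp
      omega

end Ext

end ABAux

namespace ABAux

section ExtRF

variable {n q a b : ℕ}

/-- Extend a forest on `n` vertices to one on `n+1` vertices: the new last vertex gets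
parent `t` and weight/color `v`; old roots with color `≥ q` become its children. -/
noncomputable def extRF (x : RF n (q + b) a b) (t : Option (Fin n)) (v : ℕ)
    (ht : ∀ i, t = some i → x.1.2 (rootF x.1.1 x.2.1 i) < q)
    (hv1 : t = none → v < q) (hv2 : ∀ i, t = some i → v ∈ Finset.Icc 1 a) :
    RF (n + 1) q a b := by
  refine ⟨(extP x.1.1 x.1.2 q t, extW x.1.1 x.1.2 q v), ext_isForest x t ht, ?_, ?_⟩
  · intro j hj
    dsimp only at hj ⊢
    induction j using Fin.lastCases with
    | last =>
      rw [extP_last, Option.map_eq_none_iff] at hj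
      rw [extW_last]
      exact hv1 hj
    | cast j' =>
      rw [extP_castSucc] at hj
      rw [extW_castSucc]
      rcases hp : x.1.1 j' with _ | i'
      · rw [hp] at hj
        simp only [Option.elim_none] at hj
        by_cases hq : q ≤ x.1.2 j'
        · rw [if_pos hq] at hj; cases hj
        · rw [if_neg (by simp [hq])]
          have := x.2.2.1 j' hp
          omega
      · rw [hp] at hj
        simp only [Option.elim_some] at hj
        cases hj
  · intro j i hj
    dsimp only at hj ⊢
    induction j using Fin.lastCases with
    | last =>
      rw [extP_last] at hj
      rcases ht' : t with _ | i₀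
      · rw [ht'] at hj; cases hj
      · rw [ht'] at hj
        have : i = i₀.castSucc := by cases hj; rfl
        subst this
        rw [extW_last]
        constructor
        · intro _; exact hv2 i₀ ht'
        · intro hlt
          exfalso
          have h1 : ((i₀.castSucc : Fin (n + 1)) : ℕ) = (i₀ : ℕ) := rfl
          have h2 : ((Fin.last n : Fin (n + 1)) : ℕ) = n := rfl
          have h3 := i₀.isLt
          omega
    | cast j' =>
      rw [extP_castSucc] at hj
      rw [extW_castSucc]
      rcases hp : x.1.1 j' with _ | i'
      · rw [hp] at hj
        simp only [Option.elim_none] at hj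
        by_cases hq : q ≤ x.1.2 j'
        · rw [if_pos hq] at hj
          have : i = Fin.last n := by cases hj; rfl
          subst this
          rw [if_pos ⟨rfl, hq⟩]
          have hcol := x.2.2.1 j' hp
          have hjn : ((j'.castSucc : Fin (n + 1)) : ℕ) < n := j'.2
          constructor
          · intro hlt
            exfalso
            have : ((Fin.last n : Fin (n + 1)) : ℕ) = n := rfl
            omega
          · intro _
            simp only [Finset.mem_Icc]
            omega
        · rw [if_neg hq] at hj; cases hj
      · rw [hp] at hj
        simp only [Option.elim_some] at hj
        have : i = i'.castSucc := by cases hj; rfl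
        subst this
        rw [if_neg (by simp)]
        have := x.2.2.2 j' i' hp
        exact this

@[simp] theorem extRF_p (x : RF n (q + b) a b) (t : Option (Fin n)) (v : ℕ)
    (ht) (hv1) (hv2) : (extRF x t v ht hv1 hv2).1.1 = extP x.1.1 x.1.2 q t := rfl

@[simp] theorem extRF_w (x : RF n (q + b) a b) (t : Option (Fin n)) (v : ℕ)
    (ht) (hv1) (hv2) : (extRF x t v ht hv1 hv2).1.2 = extW x.1.1 x.1.2 q v := rfl

/-- restricted parent map -/
def resP (P : Fin (n + 1) → Option (Fin (n + 1))) : Fin n → Option (Fin n) :=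
  fun j => (P j.castSucc).bind
    (fun k => if hk : k = Fin.last n then none else some (k.castPred hk))

def resW (P : Fin (n + 1) → Option (Fin (n + 1))) (W : Fin (n + 1) → ℕ) (q : ℕ) :
    Fin n → ℕ :=
  fun j => if P j.castSucc = some (Fin.last n) then q + (W j.castSucc - 1) else W j.castSucc

theorem resP_eq_some {P : Fin (n + 1) → Option (Fin (n + 1))} {j k : Fin n}
    (h : resP P j = some k) : P j.castSucc = some k.castSucc := by
  unfold resP at h
  rcases hP : P j.castSucc with _ | m
  · rw [hP] at h; cases h
  · rw [hP] at h
    rw [Option.bind_some] at h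
    rcases eq_or_ne m (Fin.last n) with rfl | hm
    · rw [dif_pos rfl] at h; cases h
    · rw [dif_neg hm] at h
      have : m.castPred hm = k := by cases h; rfl
      rw [← this, Fin.castSucc_castPred]

theorem resP_eq_none {P : Fin (n + 1) → Option (Fin (n + 1))} {j : Fin n}
    (h : resP P j = none) : P j.castSucc = none ∨ P j.castSucc = some (Fin.last n) := by
  unfold resP at h
  rcases hP : P j.castSucc with _ | m
  · exact Or.inl rfl
  · rw [hP] at h
    rw [Option.bind_some] at h
    rcases eq_or_ne m (Fin.last n) with rfl | hm
    · exact Or.inr rfl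
    · rw [dif_neg hm] at h; cases h

/-- Restrict a forest on `n+1` vertices to `n`: children of the last vertex become
roots with color `q + (weight - 1)`. -/
noncomputable def resRF (F : RF (n + 1) q a b) : RF n (q + b) a b := by
  refine ⟨(resP F.1.1, resW F.1.1 F.1.2 q), ?_, ?_, ?_⟩
  · obtain ⟨d, hd⟩ := F.2.1
    refine ⟨fun j => d j.castSucc, ?_⟩
    intro j i hji
    exact hd j.castSucc i.castSucc (resP_eq_some hji)
  · intro j hj
    dsimp only at hj ⊢
    unfold resW
    rcases resP_eq_none hj with hP | hP
    · rw [if_neg (by rw [hP]; simp)]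
      have := F.2.2.1 j.castSucc hP
      omega
    · rw [if_pos hP]
      have hlt : ((j.castSucc : Fin (n + 1)) : ℕ) < ((Fin.last n : Fin (n + 1)) : ℕ) := j.2
      have := (F.2.2.2 j.castSucc (Fin.last n) hP).2 hlt
      simp only [Finset.mem_Icc] at this
      omega
  · intro j i hj
    dsimp only at hj ⊢
    have hP := resP_eq_some hj
    have hne : (i.castSucc : Fin (n + 1)) ≠ Fin.last n := (Fin.castSucc_lt_last i).ne
    unfold resW
    rw [if_neg (by rw [hP]; simp [hne])]
    have := F.2.2.2 j.castSucc i.castSucc hP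
    exact this

@[simp] theorem resRF_p (F : RF (n + 1) q a b) : (resRF F).1.1 = resP F.1.1 := rfl
@[simp] theorem resRF_w (F : RF (n + 1) q a b) : (resRF F).1.2 = resW F.1.1 F.1.2 q := rfl

end ExtRF

end ABAux

namespace ABAux

section RoundTrip

variable {n q a b : ℕ}

theorem res_ext (x : RF n (q + b) a b) (t : Option (Fin n)) (v : ℕ)
    (ht) (hv1) (hv2) : resRF (extRF x t v ht hv1 hv2) = x := by
  apply Subtype.ext
  refine Prod.ext (funext fun j => ?_) (funext fun j => ?_)
  · show resP (extP x.1.1 x.1.2 q t) j = x.1.1 j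
    unfold resP
    rw [extP_castSucc]
    rcases hp : x.1.1 j with _ | i
    · simp only [Option.elim_none]
      by_cases hq : q ≤ x.1.2 j
      · rw [if_pos hq, Option.bind_some, dif_pos rfl]
      · rw [if_neg hq, Option.bind_none]
    · simp only [Option.elim_some]
      rw [Option.bind_some, dif_neg (Fin.castSucc_lt_last i).ne, Fin.castPred_castSucc]
  · show resW (extP x.1.1 x.1.2 q t) (extW x.1.1 x.1.2 q v) q j = x.1.2 j
    unfold resW
    rw [extP_castSucc, extW_castSucc]
    rcases hp : x.1.1 j with _ | i
    · simp only [Option.elim_none]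
      by_cases hq : q ≤ x.1.2 j
      · rw [if_pos hq, if_pos rfl, if_pos (by simp [hq])]
        omega
      · rw [if_neg hq, if_neg (by simp), if_neg (by simp [hq])]
    · simp only [Option.elim_some]
      simp [hp, (Fin.castSucc_lt_last i).ne]

theorem reaches_res {P : Fin (n + 1) → Option (Fin (n + 1))} {u v : Fin n}
    (h : Reaches (resP P) u v) : Reaches P u.castSucc v.castSucc := by
  induction h with
  | refl => exact Relation.ReflTransGen.refl
  | tail hstep hlast ih =>
    exact Relation.ReflTransGen.tail ih (resP_eq_some hlast)

/-- no-cycle: if the last vertex has parent `castSucc i₀`, then the root of `i₀` in the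
restricted forest is not a child of the last vertex; hence its color is `< q`. -/
theorem good_of (F : RF (n + 1) q a b) {k : Fin (n + 1)}
    (hk : F.1.1 (Fin.last n) = some k) (hkL : k ≠ Fin.last n) :
    (resRF F).1.2 (rootF (resRF F).1.1 (resRF F).2.1 (k.castPred hkL)) < q := by
  set i₀ := k.castPred hkL with hi₀
  set r := rootF (resRF F).1.1 (resRF F).2.1 i₀ with hr
  have hroot : resP F.1.1 r = none := rootF_is_root (resRF F).2.1 i₀
  have hreach : Reaches (resP F.1.1) i₀ r := rootF_reaches (resRF F).2.1 i₀
  have hreach' : Reaches F.1.1 i₀.castSucc r.castSucc := reaches_res hreach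
  show resW F.1.1 F.1.2 q r < q
  unfold resW
  rcases resP_eq_none hroot with hP | hP
  · rw [if_neg (by rw [hP]; simp)]
    exact F.2.2.1 r.castSucc hP
  · exfalso
    obtain ⟨d, hd⟩ := F.2.1
    have h1 : d r.castSucc ≤ d i₀.castSucc := reaches_d_le hd hreach'
    have h2 : d (Fin.last n) < d r.castSucc := hd r.castSucc (Fin.last n) hP
    have h3 : d i₀.castSucc < d (Fin.last n) := by
      apply hd (Fin.last n) i₀.castSucc
      rw [hk, hi₀, Fin.castSucc_castPred]
    omega

theorem ext_res (F : RF (n + 1) q a b) (t : Option (Fin n)) (v : ℕ)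
    (hveq : v = F.1.2 (Fin.last n))
    (hT : F.1.1 (Fin.last n) = t.map Fin.castSucc)
    (ht) (hv1) (hv2) :
    extRF (resRF F) t v ht hv1 hv2 = F := by
  subst hveq
  apply Subtype.ext
  refine Prod.ext (funext fun j => ?_) (funext fun j => ?_)
  · show extP (resP F.1.1) (resW F.1.1 F.1.2 q) q t j = F.1.1 j
    induction j using Fin.lastCases with
    | last => rw [extP_last, hT]
    | cast j' =>
      rw [extP_castSucc]
      rcases hP : F.1.1 j'.castSucc with _ | m
      · have h1 : resP F.1.1 j' = none := by unfold resP; rw [hP, Option.bind_none]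
        have h2 : resW F.1.1 F.1.2 q j' = F.1.2 j'.castSucc := by
          unfold resW; rw [if_neg (by rw [hP]; simp)]
        rw [h1, Option.elim_none, h2, if_neg (by push_neg; exact F.2.2.1 _ hP)]
      · rcases eq_or_ne m (Fin.last n) with rfl | hm
        · have h1 : resP F.1.1 j' = none := by
            unfold resP; rw [hP, Option.bind_some, dif_pos rfl]
          have h2 : resW F.1.1 F.1.2 q j' = q + (F.1.2 j'.castSucc - 1) := by
            unfold resW; rw [if_pos hP]
          have h3 : F.1.2 j'.castSucc ∈ Finset.Icc 1 b := by
            refine (F.2.2.2 j'.castSucc (Fin.last n) hP).2 ?_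
            exact j'.2
          simp only [Finset.mem_Icc] at h3
          rw [h1, Option.elim_none, h2, if_pos (by omega)]
        · have h1 : resP F.1.1 j' = some (m.castPred hm) := by
            unfold resP; rw [hP, Option.bind_some, dif_neg hm]
          rw [h1, Option.elim_some, Fin.castSucc_castPred]
  · show extW (resP F.1.1) (resW F.1.1 F.1.2 q) q (F.1.2 (Fin.last n)) j = F.1.2 j
    induction j using Fin.lastCases with
    | last => rw [extW_last]
    | cast j' =>
      rw [extW_castSucc]
      rcases hP : F.1.1 j'.castSucc with _ | m
      · have h1 : resP F.1.1 j' = none := by unfold resP; rw [hP, Option.bind_none]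
        have h2 : resW F.1.1 F.1.2 q j' = F.1.2 j'.castSucc := by
          unfold resW; rw [if_neg (by rw [hP]; simp)]
        have h3 := F.2.2.1 _ hP
        rw [if_neg (by rw [h1, h2]; exact fun hc => absurd hc.2 (by omega)), h2]
      · rcases eq_or_ne m (Fin.last n) with rfl | hm
        · have h1 : resP F.1.1 j' = none := by
            unfold resP; rw [hP, Option.bind_some, dif_pos rfl]
          have h2 : resW F.1.1 F.1.2 q j' = q + (F.1.2 j'.castSucc - 1) := by
            unfold resW; rw [if_pos hP]
          have h3 : F.1.2 j'.castSucc ∈ Finset.Icc 1 b := by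
            refine (F.2.2.2 j'.castSucc (Fin.last n) hP).2 ?_
            exact j'.2
          simp only [Finset.mem_Icc] at h3
          rw [if_pos (by rw [h1, h2]; exact ⟨rfl, by omega⟩), h2]
          omega
        · have h1 : resP F.1.1 j' = some (m.castPred hm) := by
            unfold resP; rw [hP, Option.bind_some, dif_neg hm]
          have h2 : resW F.1.1 F.1.2 q j' = F.1.2 j'.castSucc := by
            unfold resW; rw [if_neg (by rw [hP]; simp [hm])]
          rw [if_neg (by rw [h1]; simp), h2]

end RoundTrip

end ABAux

namespace ABAux

section BigEquiv

variable {n q a b : ℕ}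

noncomputable def toF (z : (Fin q ⊕ Fin n × Fin a) × RF n (q + b) a b) :
    RF (n + 1) q a b ⊕ EB n q a b :=
  match z with
  | (Sum.inl v, x) =>
    Sum.inl (extRF x none (v : ℕ) (fun _ h => by cases h) (fun _ => v.isLt)
      (fun _ h => by cases h))
  | (Sum.inr (i, c), x) =>
    if hg : x.1.2 (rootF x.1.1 x.2.1 i) < q then
      Sum.inl (extRF x (some i) ((c : ℕ) + 1)
        (fun i' h => by cases h; exact hg)
        (fun h => by cases h)
        (fun i' h => by
          simp only [Finset.mem_Icc]
          have := c.isLt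
          omega))
    else
      Sum.inr ⟨((i, c, ⟨x.1.2 (rootF x.1.1 x.2.1 i) - q, by
          have h1 := x.2.2.1 _ (rootF_is_root x.2.1 i)
          omega⟩),
        recolor x (rootF x.1.1 x.2.1 i) (rootF_is_root x.2.1 i) 0 (by
          have h1 := x.2.2.1 _ (rootF_is_root x.2.1 i)
          omega)), by
        show Function.update x.1.2 (rootF x.1.1 x.2.1 i) 0 (rootF x.1.1 _ i) = 0
        exact Function.update_self _ _ _⟩

noncomputable def invF (z : RF (n + 1) q a b ⊕ EB n q a b) :
    (Fin q ⊕ Fin n × Fin a) × RF n (q + b) a b :=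
  match z with
  | Sum.inl F =>
    (match hPL : F.1.1 (Fin.last n) with
     | none => Sum.inl ⟨F.1.2 (Fin.last n), F.2.2.1 _ hPL⟩
     | some k => Sum.inr (k.castPred (by rintro rfl; exact no_self_loop F.2.1 _ hPL),
         ⟨F.1.2 (Fin.last n) - 1, by
           have hkL : k ≠ Fin.last n := by rintro rfl; exact no_self_loop F.2.1 _ hPL
           have hkn : (k : ℕ) < ((Fin.last n : Fin (n + 1)) : ℕ) :=
             Fin.lt_last_iff_ne_last.mpr hkL
           have := (F.2.2.2 (Fin.last n) k hPL).1 hkn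
           simp only [Finset.mem_Icc] at this
           omega⟩),
     resRF F)
  | Sum.inr e =>
    (Sum.inr (e.1.1.1, e.1.1.2.1),
     recolor e.1.2 (rootF e.1.2.1.1 e.1.2.2.1 e.1.1.1) (rootF_is_root e.1.2.2.1 e.1.1.1)
       (q + (e.1.1.2.2 : ℕ)) (by have := e.1.1.2.2.isLt; omega))

end BigEquiv

end ABAux

namespace ABAux

section BigEquiv2

variable {n q a b : ℕ}

theorem toF_invF (z : RF (n + 1) q a b ⊕ EB n q a b) : toF (invF z) = z := by
  rcases z with F | e
  · simp only [invF]
    split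
    · next hPL =>
      -- F.1.1 (last n) = none
      simp only [toF]
      exact congrArg Sum.inl (ext_res F none _ rfl (by rw [hPL]; rfl) _ _ _)
    · next k hPL =>
      -- F.1.1 (last n) = some k
      have hkL : k ≠ Fin.last n := by rintro rfl; exact no_self_loop F.2.1 _ hPL
      simp only [toF]
      rw [dif_pos (good_of F hPL hkL)]
      refine congrArg Sum.inl (ext_res F (some (k.castPred hkL)) _ ?_ ?_ _ _ _)
      · have hkn : (k : ℕ) < ((Fin.last n : Fin (n + 1)) : ℕ) :=
          Fin.lt_last_iff_ne_last.mpr hkL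
        have := (F.2.2.2 (Fin.last n) k hPL).1 hkn
        simp only [Finset.mem_Icc] at this
        omega
      · rw [hPL]
        simp [Fin.castSucc_castPred]
  · obtain ⟨⟨⟨i, c, w⟩, F''⟩, h0⟩ := e
    simp only [invF]
    set r := rootF F''.1.1 F''.2.1 i with hr
    simp only [toF]
    rw [dif_neg (by
      show ¬ Function.update F''.1.2 r (q + (w : ℕ)) r < q
      rw [Function.update_self]
      omega)]
    have e1 : Function.update F''.1.2 r (q + (w : ℕ)) r - q = (w : ℕ) := by
      rw [Function.update_self]; omega
    have e2 : Function.update (Function.update F''.1.2 r (q + (w : ℕ))) r 0 = F''.1.2 := by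
      rw [Function.update_idem]
      conv_lhs => rw [← h0]
      exact Function.update_eq_self _ _
    apply congrArg Sum.inr
    refine Subtype.ext (Prod.ext (Prod.ext rfl (Prod.ext rfl (Fin.ext ?_)))
      (Subtype.ext (Prod.ext rfl ?_)))
    · exact e1
    · exact e2

theorem invF_toF (z : (Fin q ⊕ Fin n × Fin a) × RF n (q + b) a b) : invF (toF z) = z := by
  obtain ⟨s, x⟩ := z
  rcases s with v | ⟨i, c⟩
  · simp only [toF, invF]
    split
    · next hPL =>
      refine Prod.ext ?_ (res_ext x none _ _ _ _)
      simp only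
      congr 1
      apply Fin.ext
      show extW x.1.1 x.1.2 q (v : ℕ) (Fin.last n) = (v : ℕ)
      rw [extW_last]
    · next k hPL =>
      exfalso
      rw [extRF_p, extP_last] at hPL
      cases hPL
  · by_cases hg : x.1.2 (rootF x.1.1 x.2.1 i) < q
    · simp only [toF]
      rw [dif_pos hg]
      simp only [invF]
      split
      · next hPL =>
        exfalso
        rw [extRF_p, extP_last] at hPL
        cases hPL
      · next k hPL =>
        rw [extRF_p, extP_last] at hPL
        have hk : k = i.castSucc := by
          simp only [Option.map_some] at hPL
          exact (Option.some.inj hPL).symm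
        subst hk
        refine Prod.ext ?_ (res_ext x (some i) _ _ _ _)
        simp only
        congr 1
        refine Prod.ext (by simp [Fin.castPred_castSucc]) ?_
        simp only
        apply Fin.ext
        show extW x.1.1 x.1.2 q ((c : ℕ) + 1) (Fin.last n) - 1 = (c : ℕ)
        rw [extW_last]
        omega
    · simp only [toF]
      rw [dif_neg hg]
      simp only [invF]
      set r := rootF x.1.1 x.2.1 i with hr
      refine Prod.ext rfl ?_
      simp only
      apply Subtype.ext
      refine Prod.ext rfl ?_
      show Function.update (Function.update x.1.2 r 0) r
        (q + (x.1.2 r - q)) = x.1.2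
      rw [Function.update_idem]
      have hge : q ≤ x.1.2 r := by omega
      have : q + (x.1.2 r - q) = x.1.2 r := by omega
      rw [this]
      exact Function.update_eq_self _ _

noncomputable def bigEquiv (n q a b : ℕ) :
    (Fin q ⊕ Fin n × Fin a) × RF n (q + b) a b ≃ (RF (n + 1) q a b ⊕ EB n q a b) where
  toFun := toF
  invFun := invF
  left_inv := invF_toF
  right_inv := toF_invF

end BigEquiv2

end ABAux

namespace ABAux

section SmallEquiv

variable {n q a b : ℕ}

noncomputable def smallEquiv (n q a b : ℕ) :
    Fin (q + b) × EB n q a b ≃ (Fin n × Fin a × Fin b) × RF n (q + b) a b where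
  toFun z :=
    (z.2.1.1, recolor z.2.1.2 (rootF z.2.1.2.1.1 z.2.1.2.2.1 z.2.1.1.1)
      (rootF_is_root z.2.1.2.2.1 z.2.1.1.1) (z.1 : ℕ) z.1.isLt)
  invFun y :=
    (⟨y.2.1.2 (rootF y.2.1.1 y.2.2.1 y.1.1),
        y.2.2.2.1 _ (rootF_is_root y.2.2.1 y.1.1)⟩,
      ⟨(y.1, recolor y.2 (rootF y.2.1.1 y.2.2.1 y.1.1)
          (rootF_is_root y.2.2.1 y.1.1) 0
          (by have := y.2.2.2.1 _ (rootF_is_root y.2.2.1 y.1.1); omega)), by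
        show Function.update y.2.1.2 (rootF y.2.1.1 y.2.2.1 y.1.1) 0
          (rootF y.2.1.1 _ y.1.1) = 0
        exact Function.update_self _ _ _⟩)
  left_inv := by
    rintro ⟨v, ⟨⟨⟨i, c, w⟩, F⟩, h0⟩⟩
    set r := rootF F.1.1 F.2.1 i with hr
    have h0' : F.1.2 r = 0 := h0
    refine Prod.ext (Fin.ext ?_) (Subtype.ext (Prod.ext rfl (Subtype.ext (Prod.ext rfl ?_))))
    · show Function.update F.1.2 r (v : ℕ) r = (v : ℕ)
      exact Function.update_self _ _ _
    · show Function.update (Function.update F.1.2 r (v : ℕ)) r 0 = F.1.2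
      rw [Function.update_idem]
      conv_lhs => rw [← h0']
      exact Function.update_eq_self _ _
  right_inv := by
    rintro ⟨⟨i, c, w⟩, F⟩
    set r := rootF F.1.1 F.2.1 i with hr
    refine Prod.ext rfl (Subtype.ext (Prod.ext rfl ?_))
    show Function.update (Function.update F.1.2 r 0) r (F.1.2 (rootF F.1.1 F.2.1 i)) = F.1.2
    rw [show F.1.2 (rootF F.1.1 F.2.1 i) = F.1.2 r from rfl, Function.update_idem]
    exact Function.update_eq_self _ _

end SmallEquiv

end ABAux

namespace ABAux

theorem key_identity (n q a b : ℕ) :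
    (q + b) * Nat.card (RF (n + 1) q a b) + n * a * b * Nat.card (RF n (q + b) a b)
      = (q + b) * ((q + n * a) * Nat.card (RF n (q + b) a b)) := by
  have h1 : (q + n * a) * Nat.card (RF n (q + b) a b)
      = Nat.card (RF (n + 1) q a b) + Nat.card (EB n q a b) := by
    have e := Nat.card_congr (bigEquiv n q a b)
    simp only [Nat.card_prod, Nat.card_sum, Nat.card_eq_fintype_card, Fintype.card_sum, Fintype.card_prod, Fintype.card_fin] at e
    rw [← e]
    try ring
  have h2 : (q + b) * Nat.card (EB n q a b)
      = n * a * b * Nat.card (RF n (q + b) a b) := by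
    have e := Nat.card_congr (smallEquiv n q a b)
    simp only [Nat.card_prod, Nat.card_eq_fintype_card, Fintype.card_sum, Fintype.card_prod, Fintype.card_fin] at e
    rw [e]
    try ring
  rw [h1, mul_add, h2]

theorem count_RF (a b : ℕ) : ∀ n q, Nat.card (RF (n + 1) q a b)
    = q * ∏ i ∈ Finset.Icc 1 n, (q + i * a + (n + 1 - i) * b) := by
  intro n
  induction n with
  | zero =>
    intro q
    rcases Nat.eq_zero_or_pos q with rfl | hq
    · rw [Nat.card_eq_zero.mpr (Or.inl inferInstance)]
      simp
    · have hpos : 0 < q + b := by omega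
      have key := key_identity 0 q a b
      have hY : Nat.card (RF 0 (q + b) a b) = 1 := Nat.card_unique
      rw [hY] at key
      simp only [Nat.zero_mul, Nat.mul_zero, Nat.mul_one, Nat.add_zero, Nat.zero_add] at key
      have hX : Nat.card (RF 1 q a b) = q := Nat.eq_of_mul_eq_mul_left hpos key
      rw [hX]
      simp
  | succ n ih =>
    intro q
    rcases Nat.eq_zero_or_pos q with rfl | hq
    · rw [Nat.card_eq_zero.mpr (Or.inl inferInstance)]
      simp
    · have hpos : 0 < q + b := by omega
      have key := key_identity (n + 1) q a b
      rw [ih (q + b)] at key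
      set P := ∏ i ∈ Finset.Icc 1 n, (q + b + i * a + (n + 1 - i) * b) with hP
      have hgoal : ∏ i ∈ Finset.Icc 1 (n + 1), (q + i * a + (n + 1 + 1 - i) * b)
          = (q + (n + 1) * a + b) * P := by
        rw [Finset.prod_Icc_succ_top (by omega), hP, mul_comm]
        congr 1
        · have h1 : n + 1 + 1 - (n + 1) = 1 := by omega
          rw [h1]
          ring
        · apply Finset.prod_congr rfl
          intro i hi
          simp only [Finset.mem_Icc] at hi
          have h2 : n + 1 + 1 - i = (n + 1 - i) + 1 := by omega
          rw [h2]
          ring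
      have e2 : (q + b) * (q * ((q + (n + 1) * a + b) * P)) + (n + 1) * a * b * ((q + b) * P)
          = (q + b) * ((q + (n + 1) * a) * ((q + b) * P)) := by ring
      have e3 := key.trans e2.symm
      have e4 := Nat.add_right_cancel e3
      have e5 := Nat.eq_of_mul_eq_mul_left hpos e4
      rw [e5, hgoal]

end ABAux

namespace ABAux

def abEquiv (n a b : ℕ) : ABForest n a b ≃ RF n 1 a b :=
  Equiv.subtypeEquivRight (by
    intro pw
    constructor
    · rintro ⟨h1, h2, h3⟩
      exact ⟨h1, fun j hj => by rw [h2 j hj]; norm_num, h3⟩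
    · rintro ⟨h1, h2, h3⟩
      exact ⟨h1, fun j hj => by have := h2 j hj; omega, h3⟩)

theorem final_count (n b : ℕ) (hn : 1 ≤ n) :
    Nat.card (ABForest n (b + 1) b) = ∏ i ∈ Finset.Icc 2 n, (b * n + i) := by
  obtain ⟨m, rfl⟩ : ∃ m, n = m + 1 := ⟨n - 1, by omega⟩
  rw [Nat.card_congr (abEquiv (m + 1) (b + 1) b), count_RF (b + 1) b m 1, one_mul]
  have hmap : Finset.Icc 2 (m + 1) = Finset.map (addRightEmbedding 1) (Finset.Icc 1 m) := by
    rw [Finset.map_add_right_Icc]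
  rw [hmap, Finset.prod_map]
  apply Finset.prod_congr rfl
  intro i hi
  simp only [Finset.mem_Icc] at hi
  obtain ⟨k, hk⟩ := Nat.exists_eq_add_of_le (show i ≤ m + 1 by omega)
  simp only [addRightEmbedding_apply]
  rw [hk, Nat.add_sub_cancel_left]
  ring

end ABAux


/-- For b ≥ 0 and n ≥ 1, the total number of (b+1, b)-rooted labelled forests
on n vertices equals (bn+2)(bn+3)⋯(bn+n). -/
theorem abForest_catalan_count (n b : ℕ) (hn : 1 ≤ n) :
    Nat.card (ABForest n (b + 1) b) = ∏ i ∈ Finset.Icc 2 n, (b * n + i) := by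
  exact ABAux.final_count n b hn
end
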